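/- arXiv:2506.12768 — 5 statements merged into one kernel-verified Lean document; each statement's English description precedes it below -/
import Mathlib

section
/- For every sequence of exponents α : ℕ → ℕ (indexed by m = 1, 2, 3, …) satisfying α_m ≥ m for all m, there exists a sequence of real coefficients β : ℕ → ℝ such that: (i) ∑_{m=1}^∞ |β_m|^q < ∞ for every q ∈ (1, ∞); (ii) the power series P(z) = ∑_{m=1}^∞ β_m z^{α_m} converges for every z ∈ (-1,1); and (iii) there exists a strictly increasing sequence {z_k}_{k≥1} ⊂ (0,1) with z_k → 1 as k → ∞ such that P(z_k) > 0 for all odd k and P(z_k) < 0 for all even k. In particular, P changes its sign infinitely many times on the interval (0,1). -/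
set_option maxHeartbeats 1000000

open Filter Topology

namespace Stmt0Aux

variable (α : ℕ → ℕ)

/-- recursively chosen pairs of indices -/
def mm : ℕ → ℕ × ℕ
  | 0 => (1, max 2 (2 * α 1))
  | g + 1 =>
    let p := mm g
    let m1 := max (p.2 + 1) (4 ^ (g + 6) * α p.2)
    (m1, max (m1 + 1) (2 * α m1))

def m (g : ℕ) : ℕ := (mm α g).1
def m' (g : ℕ) : ℕ := (mm α g).2
def A (g : ℕ) : ℕ := α (m α g)
def B (g : ℕ) : ℕ := α (m' α g)

noncomputable def c (g : ℕ) : ℝ := (2⁻¹ : ℝ) ^ (g + 1)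

lemma c_pos (g : ℕ) : 0 < c g := by unfold c; positivity

noncomputable def beta (n : ℕ) : ℝ :=
  ∑ g ∈ Finset.range n,
    ((if n = m α g then (-1 : ℝ) ^ g * c g else 0) +
     (if n = m' α g then -((-1 : ℝ) ^ g * c g) else 0))

lemma m_zero : m α 0 = 1 := rfl

lemma m'_zero : m' α 0 = max 2 (2 * α 1) := rfl

lemma m_succ (g : ℕ) :
    m α (g + 1) = max (m' α g + 1) (4 ^ (g + 6) * B α g) := rfl

lemma m'_succ (g : ℕ) :
    m' α (g + 1) = max (m α (g + 1) + 1) (2 * A α (g + 1)) := rfl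

lemma m_lt_m' (g : ℕ) : m α g < m' α g := by
  cases g with
  | zero => simpa [m_zero, m'_zero] using lt_max_of_lt_left one_lt_two
  | succ g => rw [m'_succ]; exact lt_max_of_lt_left (Nat.lt_succ_self _)

lemma m'_lt_m_succ (g : ℕ) : m' α g < m α (g + 1) := by
  rw [m_succ]; exact lt_max_of_lt_left (Nat.lt_succ_self _)

lemma one_le_m (g : ℕ) : 1 ≤ m α g := by
  cases g with
  | zero => simp [m_zero]
  | succ g => have := m'_lt_m_succ α g; omega

lemma one_le_m' (g : ℕ) : 1 ≤ m' α g :=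
  le_trans (one_le_m α g) (le_of_lt (m_lt_m' α g))

lemma m_strictMono : StrictMono (m α) :=
  strictMono_nat_of_lt_succ fun g => lt_trans (m_lt_m' α g) (m'_lt_m_succ α g)

lemma m'_strictMono : StrictMono (m' α) :=
  strictMono_nat_of_lt_succ fun g =>
    lt_trans (m'_lt_m_succ α g) (m_lt_m' α (g + 1))

lemma m_lt_m'_of_le {g g' : ℕ} (h : g ≤ g') : m α g < m' α g' :=
  lt_of_lt_of_le (m_lt_m' α g) (m'_strictMono α |>.monotone h)

lemma m'_lt_m_of_lt {g g' : ℕ} (h : g < g') : m' α g < m α g' :=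
  lt_of_lt_of_le (m'_lt_m_succ α g) ((m_strictMono α).monotone h)

lemma m_ne_m' (g g' : ℕ) : m α g ≠ m' α g' := by
  rcases le_or_gt g g' with h | h
  · exact ne_of_lt (m_lt_m'_of_le α h)
  · exact ne_of_gt (m'_lt_m_of_lt α h)

lemma two_g_lt_m (g : ℕ) : 2 * g + 1 ≤ m α g := by
  induction g with
  | zero => simp [m_zero]
  | succ g ih =>
      have h1 := m_lt_m' α g
      have h2 := m'_lt_m_succ α g
      omega

lemma g_lt_m (g : ℕ) : g < m α g := by have := two_g_lt_m α g; omega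

lemma g_lt_m' (g : ℕ) : g < m' α g := lt_trans (g_lt_m α g) (m_lt_m' α g)

section withHyp

variable (hα : ∀ m : ℕ, 1 ≤ m → m ≤ α m)
include hα

lemma m_le_A (g : ℕ) : m α g ≤ A α g := hα _ (one_le_m α g)

lemma m'_le_B (g : ℕ) : m' α g ≤ B α g := hα _ (one_le_m' α g)

lemma one_le_A (g : ℕ) : 1 ≤ A α g := le_trans (one_le_m α g) (m_le_A α hα g)

lemma two_A_le_B (g : ℕ) : 2 * A α g ≤ B α g := by
  refine le_trans ?_ (m'_le_B α hα g)
  cases g with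
  | zero =>
      rw [m'_zero]
      exact le_max_right _ _
  | succ g =>
      rw [m'_succ]
      exact le_max_right _ _

lemma A_lt_B (g : ℕ) : A α g < B α g := by
  have h1 := two_A_le_B α hα g
  have h2 := one_le_A α hα g
  omega

lemma big_step (g : ℕ) : 4 ^ (g + 6) * B α g ≤ A α (g + 1) := by
  refine le_trans ?_ (m_le_A α hα (g + 1))
  rw [m_succ]
  exact le_max_right _ _

lemma growth_step (g : ℕ) : 32 * A α g ≤ A α (g + 1) := by
  have h1 := big_step α hα g
  have h2 := two_A_le_B α hα g
  have h3 : (4 : ℕ) ^ 6 ≤ 4 ^ (g + 6) := Nat.pow_le_pow_right (by norm_num) (by omega)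
  have h4 : 4 ^ (g + 6) * (2 * A α g) ≤ 4 ^ (g + 6) * B α g :=
    Nat.mul_le_mul_left _ h2
  have h5 : 4 ^ 6 * (2 * A α g) ≤ 4 ^ (g + 6) * (2 * A α g) :=
    Nat.mul_le_mul_right _ h3
  calc 32 * A α g ≤ 4 ^ 6 * (2 * A α g) := by ring_nf; nlinarith [Nat.zero_le (A α g)]
    _ ≤ 4 ^ (g + 6) * (2 * A α g) := h5
    _ ≤ 4 ^ (g + 6) * B α g := h4
    _ ≤ A α (g + 1) := h1

lemma growth (g d : ℕ) : 32 ^ d * A α g ≤ A α (g + d) := by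
  induction d with
  | zero => simp
  | succ d ih =>
      have h1 := growth_step α hα (g + d)
      calc 32 ^ (d + 1) * A α g = 32 * (32 ^ d * A α g) := by ring
        _ ≤ 32 * A α (g + d) := Nat.mul_le_mul_left _ ih
        _ ≤ A α (g + d + 1) := h1
        _ = A α (g + (d + 1)) := by ring_nf

lemma A_strictMono : StrictMono (A α) := by
  apply strictMono_nat_of_lt_succ
  intro g
  have h1 := growth_step α hα g
  have h2 := one_le_A α hα g
  omega

end withHyp



lemma beta_m (g : ℕ) : beta α (m α g) = (-1 : ℝ) ^ g * c g := by
  unfold beta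
  rw [Finset.sum_eq_single_of_mem g (Finset.mem_range.mpr (g_lt_m α g))]
  · rw [if_pos rfl, if_neg (ne_of_lt (m_lt_m' α g)), add_zero]
  · intro g' _ hgg'
    rw [if_neg, if_neg, add_zero]
    · exact m_ne_m' α g g'
    · exact fun h => hgg' ((m_strictMono α).injective h.symm)

lemma beta_m' (g : ℕ) : beta α (m' α g) = -((-1 : ℝ) ^ g * c g) := by
  unfold beta
  rw [Finset.sum_eq_single_of_mem g (Finset.mem_range.mpr (g_lt_m' α g))]
  · rw [if_pos rfl, if_neg (fun h => (m_ne_m' α g g) h.symm), zero_add]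
  · intro g' _ hgg'
    rw [if_neg, if_neg, add_zero]
    · exact fun h => hgg' ((m'_strictMono α).injective h.symm)
    · exact fun h => (m_ne_m' α g' g) h.symm

lemma abs_beta_m (g : ℕ) : |beta α (m α g)| = c g := by
  rw [beta_m, abs_mul, abs_pow, abs_neg, abs_one, one_pow, one_mul, abs_of_pos (c_pos g)]

lemma abs_beta_m' (g : ℕ) : |beta α (m' α g)| = c g := by
  rw [beta_m', abs_neg, abs_mul, abs_pow, abs_neg, abs_one, one_pow, one_mul,
    abs_of_pos (c_pos g)]

lemma beta_support {n : ℕ} (h : beta α n ≠ 0) : ∃ g, n = m α g ∨ n = m' α g := by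
  by_contra hc
  push_neg at hc
  apply h
  unfold beta
  refine Finset.sum_eq_zero fun g _ => ?_
  rw [if_neg (hc g).1, if_neg (hc g).2, add_zero]

/-- interleaved sequence -/
def w (t : ℕ) : ℕ := if Even t then m α (t / 2) else m' α (t / 2)

lemma w_even (a : ℕ) : w α (2 * a) = m α a := by
  simp [w, Nat.even_iff, Nat.mul_div_cancel_left _ (by norm_num : 0 < 2), Nat.mul_mod_right]

lemma w_odd (a : ℕ) : w α (2 * a + 1) = m' α a := by
  have h1 : ¬ Even (2 * a + 1) := by simp [Nat.even_iff, Nat.add_mod, Nat.mul_mod_right]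
  have h2 : (2 * a + 1) / 2 = a := by omega
  simp [w, h1, h2]

lemma w_strictMono : StrictMono (w α) := by
  apply strictMono_nat_of_lt_succ
  intro t
  rcases Nat.even_or_odd t with ⟨a, ha⟩ | ⟨a, ha⟩
  · have ht : t = 2 * a := by omega
    rw [ht, w_even, w_odd]
    exact m_lt_m' α a
  · have ht : t = 2 * a + 1 := by omega
    subst ht
    have ht1 : 2 * a + 1 + 1 = 2 * (a + 1) := by ring
    rw [ht1, w_odd, w_even]
    exact m'_lt_m_succ α a

lemma one_le_w (t : ℕ) : 1 ≤ w α t := by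
  unfold w
  split
  · exact one_le_m α _
  · exact one_le_m' α _

/-- the shifted interleaved sequence, on which `fun n => beta (n+1)` is supported -/
def u (t : ℕ) : ℕ := w α t - 1

lemma u_inj : Function.Injective (u α) := by
  intro t t' h
  have h1 := one_le_w α t
  have h2 := one_le_w α t'
  have : w α t = w α t' := by unfold u at h; omega
  exact (w_strictMono α).injective this

lemma u_add_one (t : ℕ) : u α t + 1 = w α t := by
  have := one_le_w α t
  unfold u; omega

lemma support_u {n : ℕ} (h : beta α (n + 1) ≠ 0) : ∃ t, n = u α t := by
  obtain ⟨g, hg | hg⟩ := beta_support α h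
  · exact ⟨2 * g, by unfold u; rw [w_even]; omega⟩
  · exact ⟨2 * g + 1, by unfold u; rw [w_odd]; omega⟩

lemma abs_beta_w (t : ℕ) : |beta α (w α t)| = c (t / 2) := by
  unfold w
  split
  · exact abs_beta_m α _
  · exact abs_beta_m' α _

lemma sqrt2_inv_lt_one : (Real.sqrt 2)⁻¹ < 1 := by
  rw [inv_lt_one_iff₀]
  right
  nlinarith [Real.sq_sqrt (by norm_num : (0:ℝ) ≤ 2), Real.sqrt_nonneg 2]

lemma c_div2_le (t : ℕ) : c (t / 2) ≤ ((Real.sqrt 2)⁻¹) ^ t := by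
  have h2 : ((Real.sqrt 2)⁻¹) ^ 2 = 2⁻¹ := by
    rw [inv_pow, Real.sq_sqrt (by norm_num : (0:ℝ) ≤ 2)]
  have hcalc : c (t / 2) = ((Real.sqrt 2)⁻¹) ^ (2 * (t / 2 + 1)) := by
    rw [pow_mul, h2]; rfl
  rw [hcalc]
  apply pow_le_pow_of_le_one (by positivity) (sqrt2_inv_lt_one).le
  omega



lemma summable_geo_sqrt : Summable fun t : ℕ => ((Real.sqrt 2)⁻¹) ^ t :=
  summable_geometric_of_lt_one (by positivity) (sqrt2_inv_lt_one)

lemma c_le_one (g : ℕ) : c g ≤ 1 := by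
  unfold c
  exact pow_le_one₀ (by norm_num) (by norm_num)

/-- Part (i): q-summability of the coefficients. -/
lemma summable_rpow {q : ℝ} (hq : 1 < q) :
    Summable fun n : ℕ => |beta α (n + 1)| ^ q := by
  rw [← Function.Injective.summable_iff (u_inj α)]
  · apply Summable.of_nonneg_of_le (fun t => ?_) (fun t => ?_) (summable_geo_sqrt)
    · exact Real.rpow_nonneg (abs_nonneg _) q
    · show |beta α (u α t + 1)| ^ q ≤ _
      rw [u_add_one, abs_beta_w]
      calc c (t / 2) ^ q ≤ c (t / 2) ^ (1 : ℝ) :=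
            Real.rpow_le_rpow_of_exponent_ge (c_pos _) (c_le_one _) hq.le
        _ = c (t / 2) := Real.rpow_one _
        _ ≤ _ := c_div2_le t
  · intro n hn
    by_contra h
    have hb : beta α (n + 1) ≠ 0 := by
      intro h0
      apply h
      rw [h0, abs_zero, Real.zero_rpow (by linarith)]
    obtain ⟨t, ht⟩ := support_u α hb
    exact hn ⟨t, ht.symm⟩

/-- Part (ii): convergence on (-1,1). -/
lemma summable_P {z : ℝ} (hz : |z| < 1) :
    Summable fun n : ℕ => beta α (n + 1) * z ^ α (n + 1) := by
  rw [← Function.Injective.summable_iff (u_inj α)]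
  · apply Summable.of_norm
    apply Summable.of_nonneg_of_le (fun t => norm_nonneg _) (fun t => ?_) (summable_geo_sqrt)
    show ‖beta α (u α t + 1) * z ^ α (u α t + 1)‖ ≤ _
    rw [u_add_one, Real.norm_eq_abs, abs_mul]
    calc |beta α (w α t)| * |z ^ α (w α t)| ≤ c (t / 2) * 1 := by
          rw [abs_beta_w]
          apply mul_le_mul_of_nonneg_left _ (c_pos _).le
          rw [abs_pow]
          exact pow_le_one₀ (abs_nonneg z) hz.le
      _ = c (t / 2) := mul_one _
      _ ≤ _ := c_div2_le t
  · intro n hn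
    by_contra h
    have hb : beta α (n + 1) ≠ 0 := fun h0 => h (by rw [h0, zero_mul])
    obtain ⟨t, ht⟩ := support_u α hb
    exact hn ⟨t, ht.symm⟩



noncomputable def beta1 (n : ℕ) : ℝ :=
  ∑ g ∈ Finset.range n, if n = m α g then (-1 : ℝ) ^ g * c g else 0

noncomputable def beta2 (n : ℕ) : ℝ :=
  ∑ g ∈ Finset.range n, if n = m' α g then -((-1 : ℝ) ^ g * c g) else 0

lemma beta_eq (n : ℕ) : beta α n = beta1 α n + beta2 α n := by
  unfold beta beta1 beta2
  rw [← Finset.sum_add_distrib]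

lemma beta1_m (g : ℕ) : beta1 α (m α g) = (-1 : ℝ) ^ g * c g := by
  unfold beta1
  rw [Finset.sum_eq_single_of_mem g (Finset.mem_range.mpr (g_lt_m α g))]
  · rw [if_pos rfl]
  · intro g' _ hgg'
    exact if_neg fun h => hgg' ((m_strictMono α).injective h.symm)

lemma beta2_m' (g : ℕ) : beta2 α (m' α g) = -((-1 : ℝ) ^ g * c g) := by
  unfold beta2
  rw [Finset.sum_eq_single_of_mem g (Finset.mem_range.mpr (g_lt_m' α g))]
  · rw [if_pos rfl]
  · intro g' _ hgg'
    exact if_neg fun h => hgg' ((m'_strictMono α).injective h.symm)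

lemma beta1_support {n : ℕ} (h : beta1 α n ≠ 0) : ∃ g, n = m α g := by
  by_contra hc
  push_neg at hc
  exact h (Finset.sum_eq_zero fun g _ => if_neg (hc g))

lemma beta2_support {n : ℕ} (h : beta2 α n ≠ 0) : ∃ g, n = m' α g := by
  by_contra hc
  push_neg at hc
  exact h (Finset.sum_eq_zero fun g _ => if_neg (hc g))

/-- the grouped series -/
noncomputable def G (z : ℝ) (g : ℕ) : ℝ :=
  (-1 : ℝ) ^ g * c g * (z ^ A α g - z ^ B α g)

section FixedZ

variable {z : ℝ} (hz0 : 0 ≤ z) (hz1 : z ≤ 1)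
include hz0 hz1

lemma abs_f1_le (g : ℕ) : |(-1 : ℝ) ^ g * c g * z ^ A α g| ≤ (2⁻¹ : ℝ) ^ g := by
  rw [abs_mul, abs_mul, abs_pow, abs_neg, abs_one, one_pow, one_mul,
    abs_of_pos (c_pos g), abs_pow, abs_of_nonneg hz0]
  calc c g * z ^ A α g ≤ c g * 1 :=
        mul_le_mul_of_nonneg_left (pow_le_one₀ hz0 hz1) (c_pos g).le
    _ = c g := mul_one _
    _ ≤ (2⁻¹ : ℝ) ^ g := by
        unfold c
        exact pow_le_pow_of_le_one (by norm_num) (by norm_num) (by omega)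

lemma summable_f1 : Summable fun g => (-1 : ℝ) ^ g * c g * z ^ A α g := by
  apply Summable.of_norm
  apply Summable.of_nonneg_of_le (fun g => norm_nonneg _)
    (fun g => ?_) (summable_geometric_of_lt_one (by norm_num) (by norm_num : (2⁻¹:ℝ) < 1))
  exact abs_f1_le α hz0 hz1 g

lemma abs_f2_le (g : ℕ) : |-((-1 : ℝ) ^ g * c g) * z ^ B α g| ≤ (2⁻¹ : ℝ) ^ g := by
  rw [neg_mul, abs_neg]
  have h := abs_f1_le α hz0 hz1 g
  calc |(-1 : ℝ) ^ g * c g * z ^ B α g|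
      = |(-1 : ℝ) ^ g * c g| * |z ^ B α g| := abs_mul _ _
    _ ≤ |(-1 : ℝ) ^ g * c g| * 1 := by
        apply mul_le_mul_of_nonneg_left _ (abs_nonneg _)
        rw [abs_pow, abs_of_nonneg hz0]
        exact pow_le_one₀ hz0 hz1
    _ = |(-1 : ℝ) ^ g * c g| := mul_one _
    _ ≤ (2⁻¹ : ℝ) ^ g := by
        rw [abs_mul, abs_pow, abs_neg, abs_one, one_pow, one_mul, abs_of_pos (c_pos g)]
        unfold c
        exact pow_le_pow_of_le_one (by norm_num) (by norm_num) (by omega)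

lemma summable_f2 : Summable fun g => -((-1 : ℝ) ^ g * c g) * z ^ B α g := by
  apply Summable.of_norm
  apply Summable.of_nonneg_of_le (fun g => norm_nonneg _)
    (fun g => ?_) (summable_geometric_of_lt_one (by norm_num) (by norm_num : (2⁻¹:ℝ) < 1))
  exact abs_f2_le α hz0 hz1 g

lemma summable_G : Summable (G α z) := by
  have h := (summable_f1 α hz0 hz1).add (summable_f2 α hz0 hz1)
  apply h.congr
  intro g
  unfold G
  ring

lemma hasSum_key :
    HasSum (fun n => beta α (n + 1) * z ^ α (n + 1)) (∑' g, G α z g) := by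
  have hf1 := summable_f1 α hz0 hz1
  have hf2 := summable_f2 α hz0 hz1
  have hi1 : Function.Injective (fun g : ℕ => u α (2 * g)) :=
    (u_inj α).comp fun a b h => by omega
  have hi2 : Function.Injective (fun g : ℕ => u α (2 * g + 1)) :=
    (u_inj α).comp fun a b h => by omega
  have h1 : HasSum (fun n => beta1 α (n + 1) * z ^ α (n + 1)) (∑' g, (-1:ℝ)^g * c g * z ^ A α g) := by
    refine (Function.Injective.hasSum_iff hi1 ?_).mp (hf1.hasSum.congr_fun fun g => ?_)
    · intro n hn
      rcases eq_or_ne (beta1 α (n + 1)) 0 with h | h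
      · rw [h, zero_mul]
      · obtain ⟨g, hg⟩ := beta1_support α h
        exact absurd ⟨g, by simp only [u]; rw [w_even]; omega⟩ hn
    · show beta1 α (u α (2 * g) + 1) * z ^ α (u α (2 * g) + 1) = _
      rw [u_add_one, w_even, beta1_m]
      rfl
  have h2 : HasSum (fun n => beta2 α (n + 1) * z ^ α (n + 1))
      (∑' g, -((-1:ℝ)^g * c g) * z ^ B α g) := by
    refine (Function.Injective.hasSum_iff hi2 ?_).mp (hf2.hasSum.congr_fun fun g => ?_)
    · intro n hn
      rcases eq_or_ne (beta2 α (n + 1)) 0 with h | h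
      · rw [h, zero_mul]
      · obtain ⟨g, hg⟩ := beta2_support α h
        exact absurd ⟨g, by simp only [u]; rw [w_odd]; omega⟩ hn
    · show beta2 α (u α (2 * g + 1) + 1) * z ^ α (u α (2 * g + 1) + 1) = _
      rw [u_add_one, w_odd, beta2_m']
      rfl
  have h3 := h1.add h2
  have heq : (fun n => beta α (n + 1) * z ^ α (n + 1)) =
      fun n => beta1 α (n + 1) * z ^ α (n + 1) + beta2 α (n + 1) * z ^ α (n + 1) := by
    funext n
    rw [beta_eq, add_mul]
  rw [heq]
  convert h3 using 1
  rw [← Summable.tsum_add hf1 hf2]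
  exact tsum_congr fun g => by unfold G; ring

lemma tsum_key :
    ∑' n, beta α (n + 1) * z ^ α (n + 1) = ∑' g, G α z g :=
  (hasSum_key α hz0 hz1).tsum_eq

end FixedZ


lemma pow32 {d : ℕ} (hd : 1 ≤ d) : 32 * d ≤ 32 ^ d := by
  induction d with
  | zero => omega
  | succ d ih =>
      rcases Nat.eq_zero_or_pos d with h | h
      · subst h; norm_num
      · have h1 := ih h
        have h2 : 32 ≤ 32 ^ d := by
          calc 32 ≤ 32 * d := by omega
            _ ≤ 32 ^ d := h1
        calc 32 * (d + 1) = 32 * d + 32 := by ring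
          _ ≤ 32 ^ d + 32 ^ d := by omega
          _ ≤ 32 ^ d * 32 := by nlinarith [Nat.one_le_two_pow (n := d)]
          _ = 32 ^ (d + 1) := (pow_succ 32 d).symm

lemma one_sub_pow_le {z : ℝ} (hz0 : 0 ≤ z) (hz1 : z ≤ 1) (n : ℕ) :
    1 - z ^ n ≤ n * (1 - z) := by
  induction n with
  | zero => simp
  | succ n ih =>
      have h1 : z ^ n ≤ 1 := pow_le_one₀ hz0 hz1
      have h2 : 0 ≤ z ^ n := pow_nonneg hz0 n
      have h3 : z * z ^ n ≤ z ^ n := by nlinarith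
      push_cast
      rw [pow_succ]
      nlinarith

lemma exp_neg_one_le_half : Real.exp (-1) ≤ 2⁻¹ := by
  rw [Real.exp_neg]
  have h : (2 : ℝ) ≤ Real.exp 1 := by
    have := Real.add_one_le_exp (1 : ℝ)
    linarith
  rw [inv_le_inv₀ (by positivity) (by norm_num)]
  exact h

lemma exp_diff_ge : 8⁻¹ ≤ Real.exp (-1) - Real.exp (-1) ^ 2 := by
  have h1 := Real.exp_one_gt_d9
  have h2 := Real.exp_one_lt_d9
  have h4 : (0:ℝ) < Real.exp 1 := Real.exp_pos 1
  have h3 : Real.exp (-1) * Real.exp 1 = 1 := by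
    rw [Real.exp_neg]
    field_simp
  set x := Real.exp (-1) with hxdef
  set E := Real.exp 1 with hEdef
  have hx : 0 < x := Real.exp_pos _
  have hxlow : (0.36 : ℝ) < x := by nlinarith
  have hxhigh : x < (0.37 : ℝ) := by nlinarith
  nlinarith [mul_nonneg (sub_nonneg.mpr hxhigh.le) hx.le]

section Sign

variable (hα : ∀ m : ℕ, 1 ≤ m → m ≤ α m)
include hα

lemma keyN {g g₀ : ℕ} (h : g < g₀) : 4 ^ (g₀ + 5) * B α g ≤ A α g₀ := by
  have h1 := big_step α hα g
  have h2 := growth α hα (g + 1) (g₀ - g - 1)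
  have h3 : g + 1 + (g₀ - g - 1) = g₀ := by omega
  rw [h3] at h2
  have h4 : 4 ^ (g₀ + 5) = 4 ^ (g₀ - g - 1) * 4 ^ (g + 6) := by
    rw [← pow_add]; congr 1; omega
  have h5 : (4:ℕ) ^ (g₀ - g - 1) ≤ 32 ^ (g₀ - g - 1) :=
    Nat.pow_le_pow_left (by norm_num) _
  calc 4 ^ (g₀ + 5) * B α g = 4 ^ (g₀ - g - 1) * (4 ^ (g + 6) * B α g) := by
        rw [h4]; ring
    _ ≤ 4 ^ (g₀ - g - 1) * A α (g + 1) := Nat.mul_le_mul_left _ h1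
    _ ≤ 32 ^ (g₀ - g - 1) * A α (g + 1) := Nat.mul_le_mul_right _ h5
    _ ≤ A α g₀ := h2

end Sign


noncomputable def zp (g₀ : ℕ) : ℝ := Real.exp (-((A α g₀ : ℝ))⁻¹)

lemma hgeo1 : HasSum (fun d : ℕ => (2⁻¹ : ℝ) ^ (d + 1)) 1 := by
  have h := (hasSum_geometric_of_lt_one (by norm_num) (by norm_num : (2⁻¹:ℝ) < 1)).mul_left
    (2⁻¹ : ℝ)
  have h2 : (2⁻¹ : ℝ) * (1 - 2⁻¹)⁻¹ = 1 := by norm_num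
  rw [h2] at h
  exact h.congr_fun fun d => pow_succ' _ _

section Sign2

variable (hα : ∀ m : ℕ, 1 ≤ m → m ≤ α m) (g₀ : ℕ)
include hα

lemma A_pos_real : (0:ℝ) < (A α g₀ : ℝ) := by
  have := one_le_A α hα g₀
  exact_mod_cast Nat.lt_of_lt_of_le Nat.zero_lt_one this

omit hα in
lemma zp_pos : 0 < zp α g₀ := Real.exp_pos _

lemma zp_lt_one : zp α g₀ < 1 := by
  unfold zp
  rw [Real.exp_lt_one_iff]
  have := A_pos_real α hα g₀
  simp only [neg_lt, neg_zero]
  positivity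

omit hα in
lemma zp_pow (n : ℕ) : zp α g₀ ^ n = Real.exp (-((n : ℝ) / (A α g₀ : ℝ))) := by
  unfold zp
  rw [← Real.exp_nat_mul]
  congr 1
  ring

lemma zp_pow_A : zp α g₀ ^ A α g₀ = Real.exp (-1) := by
  rw [zp_pow α]
  congr 1
  rw [div_self (ne_of_gt (A_pos_real α hα g₀))]

lemma dominant : (2⁻¹:ℝ) ^ (g₀ + 4) ≤ (-1:ℝ) ^ g₀ * G α (zp α g₀) g₀ := by
  unfold G
  rw [← mul_assoc, ← mul_assoc, ← pow_add,
    Even.neg_one_pow (⟨g₀, rfl⟩ : Even (g₀ + g₀)), one_mul]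
  have hB : zp α g₀ ^ B α g₀ ≤ Real.exp (-1) ^ 2 := by
    calc zp α g₀ ^ B α g₀ ≤ zp α g₀ ^ (2 * A α g₀) :=
          pow_le_pow_of_le_one (zp_pos α g₀).le (zp_lt_one α hα g₀).le (two_A_le_B α hα g₀)
      _ = (zp α g₀ ^ A α g₀) ^ 2 := by rw [← pow_mul, mul_comm]
      _ = Real.exp (-1) ^ 2 := by rw [zp_pow_A α hα]
  have hA := zp_pow_A α hα g₀
  have hd := exp_diff_ge
  calc (2⁻¹:ℝ) ^ (g₀ + 4) = c g₀ * 8⁻¹ := by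
        unfold c
        rw [show (8⁻¹:ℝ) = (2⁻¹) ^ 3 by norm_num, ← pow_add]
    _ ≤ c g₀ * (zp α g₀ ^ A α g₀ - zp α g₀ ^ B α g₀) := by
        apply mul_le_mul_of_nonneg_left _ (c_pos g₀).le
        rw [hA]
        linarith
    _ = _ := rfl

lemma abs_G_eq (g : ℕ) :
    |G α (zp α g₀) g| = c g * (zp α g₀ ^ A α g - zp α g₀ ^ B α g) := by
  have hsub : 0 ≤ zp α g₀ ^ A α g - zp α g₀ ^ B α g := by
    rw [sub_nonneg]
    exact pow_le_pow_of_le_one (zp_pos α g₀).le (zp_lt_one α hα g₀).le (A_lt_B α hα g).le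
  unfold G
  rw [abs_mul, abs_mul, abs_pow, abs_neg, abs_one, one_pow, one_mul,
    abs_of_pos (c_pos g), abs_of_nonneg hsub]

lemma remainder :
    |∑' g, G α (zp α g₀) g - G α (zp α g₀) g₀| ≤ (2⁻¹:ℝ) ^ (g₀ + 6) := by
  set z := zp α g₀ with hzdef
  have hz0 : (0:ℝ) ≤ z := (zp_pos α g₀).le
  have hz1 : z ≤ 1 := (zp_lt_one α hα g₀).le
  have hA0R := A_pos_real α hα g₀
  have hG : Summable (G α z) := summable_G α hz0 hz1
  have hsplit := Summable.tsum_eq_add_tsum_ite hG g₀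
  rw [hsplit]
  rw [add_sub_cancel_left]
  -- the remainder series
  set R : ℕ → ℝ := fun g => if g = g₀ then 0 else G α z g with hRdef
  set E1 : ℕ → ℝ := fun g => (2⁻¹:ℝ) ^ (2*g₀+8) * (2⁻¹) ^ (g+1) with hE1def
  set E2 : ℕ → ℝ := fun g => if g₀ < g then (2⁻¹:ℝ) ^ (g₀+8) * (2⁻¹) ^ (g-g₀) else 0
    with hE2def
  have hE2nonneg : ∀ g, 0 ≤ E2 g := by
    intro g
    simp only [hE2def]
    split
    · positivity
    · exact le_rfl
  have hpt : ∀ g, |R g| ≤ E1 g + E2 g := by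
    intro g
    rcases eq_or_ne g g₀ with h | h
    · simp only [hRdef]
      rw [if_pos h, abs_zero]
      have h1 := hE2nonneg g
      have h2 : (0:ℝ) ≤ E1 g := by simp only [hE1def]; positivity
      linarith
    · simp only [hRdef, if_neg h]
      rw [abs_G_eq α hα]
      rcases lt_or_gt_of_ne h with hlt | hgt
      · -- g < g₀ : early groups
        have hBA : ((4:ℝ) ^ (g₀+5) * (B α g : ℝ)) ≤ (A α g₀ : ℝ) := by
          exact_mod_cast keyN α hα hlt
        have h1z : 1 - z ≤ ((A α g₀ : ℝ))⁻¹ := by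
          have h := Real.add_one_le_exp (-((A α g₀ : ℝ))⁻¹)
          simp only [hzdef]
          unfold zp
          linarith
        have hBdiv : (B α g : ℝ) * ((A α g₀ : ℝ))⁻¹ ≤ (2⁻¹:ℝ) ^ (2*g₀+10) := by
          rw [← div_eq_mul_inv, div_le_iff₀ hA0R]
          have hpow : ((2:ℝ)⁻¹) ^ (2*g₀+10) * (4:ℝ) ^ (g₀+5) = 1 := by
            rw [inv_pow, show (4:ℝ) = 2^2 by norm_num, ← pow_mul,
              show 2*(g₀+5) = 2*g₀+10 by ring]
            exact inv_mul_cancel₀ (by positivity)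
          calc (B α g : ℝ) = ((2⁻¹:ℝ) ^ (2*g₀+10) * (4:ℝ) ^ (g₀+5)) * (B α g : ℝ) := by
                rw [hpow, one_mul]
            _ = (2⁻¹:ℝ) ^ (2*g₀+10) * ((4:ℝ) ^ (g₀+5) * (B α g : ℝ)) := by ring
            _ ≤ (2⁻¹:ℝ) ^ (2*g₀+10) * (A α g₀ : ℝ) :=
                mul_le_mul_of_nonneg_left hBA (by positivity)
        have hchain : z ^ A α g - z ^ B α g ≤ (2⁻¹:ℝ) ^ (2*g₀+10) := by
          calc z ^ A α g - z ^ B α g ≤ 1 - z ^ B α g := by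
                have : z ^ A α g ≤ 1 := pow_le_one₀ hz0 hz1
                linarith
            _ ≤ (B α g : ℝ) * (1 - z) := one_sub_pow_le hz0 hz1 _
            _ ≤ (B α g : ℝ) * ((A α g₀ : ℝ))⁻¹ := by
                apply mul_le_mul_of_nonneg_left h1z (Nat.cast_nonneg _)
            _ ≤ (2⁻¹:ℝ) ^ (2*g₀+10) := hBdiv
        calc c g * (z ^ A α g - z ^ B α g) ≤ c g * (2⁻¹:ℝ) ^ (2*g₀+10) :=
              mul_le_mul_of_nonneg_left hchain (c_pos g).le
          _ ≤ E1 g := by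
              simp only [hE1def]
              unfold c
              rw [mul_comm]
              apply mul_le_mul_of_nonneg_right _ (by positivity)
              apply pow_le_pow_of_le_one (by norm_num) (by norm_num)
              omega
          _ ≤ E1 g + E2 g := le_add_of_nonneg_right (hE2nonneg g)
      · -- g₀ < g : late groups
        have hd1 : 1 ≤ g - g₀ := by omega
        have hAg : 32 * (g - g₀) * A α g₀ ≤ A α g := by
          have h1 := growth α hα g₀ (g - g₀)
          have h2 : g₀ + (g - g₀) = g := by omega
          rw [h2] at h1
          have h3 := pow32 hd1
          calc 32 * (g - g₀) * A α g₀ ≤ 32 ^ (g - g₀) * A α g₀ :=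
                Nat.mul_le_mul_right _ h3
            _ ≤ A α g := h1
        have hzA : z ^ A α g ≤ (2⁻¹:ℝ) ^ (32 * (g - g₀)) := by
          rw [hzdef, zp_pow α]
          calc Real.exp (-((A α g : ℝ) / (A α g₀ : ℝ)))
              ≤ Real.exp (-((32 * (g - g₀) : ℕ) : ℝ)) := by
                apply Real.exp_le_exp.mpr
                rw [neg_le_neg_iff]
                rw [le_div_iff₀ hA0R]
                exact_mod_cast hAg
            _ = Real.exp (-1) ^ (32 * (g - g₀)) := by
                rw [← Real.exp_nat_mul]
                congr 1
                ring
            _ ≤ (2⁻¹:ℝ) ^ (32 * (g - g₀)) :=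
                pow_le_pow_left₀ (Real.exp_pos _).le exp_neg_one_le_half _
        have hzB : 0 ≤ z ^ B α g := pow_nonneg hz0 _
        calc c g * (z ^ A α g - z ^ B α g) ≤ c g * z ^ A α g := by
              apply mul_le_mul_of_nonneg_left _ (c_pos g).le
              linarith
          _ ≤ c g * (2⁻¹:ℝ) ^ (32 * (g - g₀)) :=
              mul_le_mul_of_nonneg_left hzA (c_pos g).le
          _ ≤ E2 g := by
              simp only [hE2def, if_pos hgt]
              unfold c
              rw [← pow_add, ← pow_add]
              apply pow_le_pow_of_le_one (by norm_num) (by norm_num)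
              omega
          _ ≤ E1 g + E2 g := le_add_of_nonneg_left (by simp only [hE1def]; positivity)
  have hE2sum : HasSum E2 ((2⁻¹:ℝ) ^ (g₀+8)) := by
    have hi : Function.Injective (fun d : ℕ => g₀ + 1 + d) := fun a b h => by
      simp only [] at h; omega
    have hsupp : ∀ n, n ∉ Set.range (fun d : ℕ => g₀ + 1 + d) → E2 n = 0 := by
      intro n hn
      simp only [hE2def]
      rw [if_neg]
      intro hc
      exact hn ⟨n - g₀ - 1, show g₀ + 1 + (n - g₀ - 1) = n by omega⟩
    refine (Function.Injective.hasSum_iff hi hsupp).mp ?_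
    have h := hgeo1.mul_left ((2⁻¹:ℝ) ^ (g₀+8))
    rw [mul_one] at h
    apply h.congr_fun
    intro d
    simp only [hE2def, Function.comp]
    rw [if_pos (by omega : g₀ < g₀ + 1 + d)]
    congr 2
    omega
  have hE1sum : HasSum E1 ((2⁻¹:ℝ) ^ (2*g₀+8)) := by
    have h := hgeo1.mul_left ((2⁻¹:ℝ) ^ (2*g₀+8))
    rw [mul_one] at h
    exact h
  have hEsum : HasSum (fun g => E1 g + E2 g) ((2⁻¹:ℝ) ^ (2*g₀+8) + (2⁻¹:ℝ) ^ (g₀+8)) :=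
    hE1sum.add hE2sum
  have hRabs : Summable fun g => |R g| :=
    Summable.of_nonneg_of_le (fun g => abs_nonneg _) hpt hEsum.summable
  have hnorm : (fun g => ‖R g‖) = fun g => |R g| := funext fun g => Real.norm_eq_abs _
  have hRabs' : Summable fun g => ‖R g‖ := by rw [hnorm]; exact hRabs
  calc |∑' g, R g| = ‖∑' g, R g‖ := (Real.norm_eq_abs _).symm
    _ ≤ ∑' g, ‖R g‖ := norm_tsum_le_tsum_norm hRabs'
    _ = ∑' g, |R g| := by rw [hnorm]
    _ ≤ ∑' g, (E1 g + E2 g) := Summable.tsum_le_tsum hpt hRabs hEsum.summable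
    _ = (2⁻¹:ℝ) ^ (2*g₀+8) + (2⁻¹:ℝ) ^ (g₀+8) := hEsum.tsum_eq
    _ ≤ (2⁻¹:ℝ) ^ (g₀+8) + (2⁻¹:ℝ) ^ (g₀+8) := by
        have : ((2:ℝ)⁻¹) ^ (2*g₀+8) ≤ (2⁻¹:ℝ) ^ (g₀+8) :=
          pow_le_pow_of_le_one (by norm_num) (by norm_num) (by omega)
        linarith
    _ = 2 * (2⁻¹:ℝ) ^ (g₀+8) := by ring
    _ ≤ (2⁻¹:ℝ) ^ (g₀ + 6) := by
        rw [show g₀ + 8 = (g₀ + 6) + 2 by ring, pow_add]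
        nlinarith [pow_pos (by norm_num : (0:ℝ) < 2⁻¹) (g₀+6)]

end Sign2

end Stmt0Aux
open Stmt0Aux in
/-- Theorem 3.2 (i)-(iii) of the paper: affirmative answer to question (Q). -/
theorem stmt0 (α : ℕ → ℕ) (hα : ∀ m : ℕ, 1 ≤ m → m ≤ α m) :
    ∃ β : ℕ → ℝ,
      (∀ q : ℝ, 1 < q → Summable fun m : ℕ => |β (m + 1)| ^ q) ∧
      (∀ z : ℝ, z ∈ Set.Ioo (-1 : ℝ) 1 →
        Summable fun m : ℕ => β (m + 1) * z ^ α (m + 1)) ∧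
      ∃ z : ℕ → ℝ,
        (∀ k : ℕ, 1 ≤ k → z k ∈ Set.Ioo (0 : ℝ) 1) ∧
        (∀ k : ℕ, 1 ≤ k → z k < z (k + 1)) ∧
        Tendsto z atTop (𝓝 1) ∧
        (∀ k : ℕ, 1 ≤ k → Odd k →
          0 < ∑' m : ℕ, β (m + 1) * z k ^ α (m + 1)) ∧
        (∀ k : ℕ, 1 ≤ k → Even k →
          (∑' m : ℕ, β (m + 1) * z k ^ α (m + 1)) < 0) := by
  refine ⟨beta α, fun q hq => summable_rpow α hq, fun z hz => summable_P α (abs_lt.mpr ⟨hz.1, hz.2⟩), fun k => zp α (k - 1), ?_, ?_, ?_, ?_, ?_⟩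
  · exact fun k _ => ⟨zp_pos α _, zp_lt_one α hα _⟩
  · intro k hk
    have hA : A α (k - 1) < A α (k + 1 - 1) := by
      apply A_strictMono α hα
      omega
    unfold zp
    apply Real.exp_lt_exp.mpr
    rw [neg_lt_neg_iff]
    apply inv_strictAnti₀ (A_pos_real α hα _)
    exact_mod_cast hA
  · -- tendsto
    have hA : Tendsto (fun k : ℕ => ((A α (k - 1) : ℕ) : ℝ)) atTop atTop := by
      apply tendsto_atTop_mono _ (tendsto_atTop_add_const_right atTop (-1 : ℝ)
        tendsto_natCast_atTop_atTop)
      intro k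
      cases k with
      | zero =>
          have := A_pos_real α hα 0
          simp only [Nat.zero_sub, Nat.cast_zero]
          linarith
      | succ j =>
          have h1 : j ≤ A α j := le_trans (by have := two_g_lt_m α j; omega)
            (m_le_A α hα j)
          have h2 : ((j:ℝ)) ≤ (A α j : ℝ) := by exact_mod_cast h1
          simpa using by linarith
    have h0 : Tendsto (fun k : ℕ => -((A α (k - 1) : ℝ))⁻¹) atTop (𝓝 0) := by
      simpa using (tendsto_inv_atTop_zero.comp hA).neg
    have h1 := (Real.continuous_exp.tendsto 0).comp h0
    simpa [Function.comp_def, zp, Real.exp_zero] using h1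
  · -- odd: positive
    intro k hk hodd
    set g₀ := k - 1 with hg0
    have heven : Even g₀ := Nat.Odd.sub_odd hodd odd_one
    have hkey := tsum_key α (zp_pos α g₀).le (zp_lt_one α hα g₀).le
    show 0 < ∑' n : ℕ, beta α (n + 1) * zp α g₀ ^ α (n + 1)
    rw [hkey]
    have hdom := dominant α hα g₀
    rw [heven.neg_one_pow, one_mul] at hdom
    have hrem := abs_le.mp (remainder α hα g₀)
    have hsmall : ((2:ℝ)⁻¹) ^ (g₀ + 6) < (2⁻¹:ℝ) ^ (g₀ + 4) := by
      apply pow_lt_pow_right_of_lt_one₀ (by norm_num) (by norm_num)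
      omega
    linarith [hrem.1, hrem.2]
  · -- even: negative
    intro k hk heven
    set g₀ := k - 1 with hg0
    have hodd : Odd g₀ := Nat.Even.sub_odd hk heven odd_one
    have hkey := tsum_key α (zp_pos α g₀).le (zp_lt_one α hα g₀).le
    show (∑' n : ℕ, beta α (n + 1) * zp α g₀ ^ α (n + 1)) < 0
    rw [hkey]
    have hdom := dominant α hα g₀
    rw [hodd.neg_one_pow, neg_one_mul] at hdom
    have hrem := abs_le.mp (remainder α hα g₀)
    have hsmall : ((2:ℝ)⁻¹) ^ (g₀ + 6) < (2⁻¹:ℝ) ^ (g₀ + 4) := by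
      apply pow_lt_pow_right_of_lt_one₀ (by norm_num) (by norm_num)
      omega
    linarith [hrem.1, hrem.2]
end

section
/- For every sequence of exponents α : ℕ → ℕ (indexed by m = 1, 2, 3, …) satisfying α_m ≥ m for all m, the coefficient sequence β : ℕ → ℝ in the affirmative answer to question (Q) can be chosen so that additionally β_m ∈ [-1,1] for all m and ∑_{m=1}^∞ |β_m|^γ = ∑_{m=1}^∞ (1/m)^γ < ∞ for every γ ∈ (1, ∞). That is: there exists β : ℕ → ℝ with β_m ∈ [-1,1] for all m, ∑_{m=1}^∞ |β_m|^γ = ∑_{m=1}^∞ m^{-γ} for all γ ∈ (1,∞), and a strictly increasing sequence {z_k}_{k≥1} ⊂ (0,1) with z_k → 1 such that the series P(z) = ∑_{m=1}^∞ β_m z^{α_m} converges for all z ∈ (-1,1) and satisfies P(z_k) > 0 for all odd k and P(z_k) < 0 for all even k. -/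
set_option maxHeartbeats 2000000
open Filter Topology Finset

namespace Stmt1Aux

noncomputable def H (N : ℕ) : ℝ := ∑ m ∈ Finset.range N, (1 / (m + 1) : ℝ)

lemma H_nonneg (N : ℕ) : 0 ≤ H N :=
  Finset.sum_nonneg fun m _ => by positivity

lemma exists_step (α : ℕ → ℕ) (N : ℕ) (w c : ℝ)
    (hw0 : 0 < w) (hw1 : w < 1) (hc : c < 1) :
    ∃ p : ℕ × ℝ, N < p.1 ∧ w < p.2 ∧ p.2 < 1 ∧ c < p.2 ∧
      p.2 ^ (p.1 + 1) ≤ 1 - p.2 ∧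
      H N + 2 ≤ ∑ m ∈ Finset.Ico N p.1, p.2 ^ (α (m + 1)) / (m + 1) := by
  -- choose M
  obtain ⟨M, hM⟩ : ∃ M, N + 1 ≤ M ∧ 2 * H N + 3 ≤ H M := by
    have h1 := Real.tendsto_sum_range_one_div_nat_succ_atTop.eventually_ge_atTop (2 * H N + 3)
    have h2 : ∀ᶠ M in atTop, N + 1 ≤ M := eventually_ge_atTop (N + 1)
    exact (h2.and h1).exists
  have hNM : N ≤ M := le_trans (Nat.le_succ N) hM.1
  -- the finite sum function
  set g : ℝ → ℝ := fun x => ∑ m ∈ Finset.Ico N M, x ^ (α (m + 1)) / (m + 1) with hg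
  have hgc : Continuous g := by
    apply continuous_finset_sum
    intro m _
    exact (continuous_pow _).div_const _
  have hg1 : H N + 3 ≤ g 1 := by
    have : g 1 = H M - H N := by
      have := Finset.sum_Ico_consecutive (fun m : ℕ => (1 / (m + 1) : ℝ)) (Nat.zero_le N) hNM
      simp only [hg, one_pow]
      have hr : ∀ (K : ℕ), H K = ∑ m ∈ Finset.Ico 0 K, (1 / (m + 1) : ℝ) := by
        intro K; rw [H, Finset.range_eq_Ico]
      rw [hr, hr, ← this]
      ring
    rw [this]; linarith [hM.2, H_nonneg N]
  -- pick z close to 1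
  obtain ⟨u, hu_mono, hu_lt, hu_tend⟩ := exists_seq_strictMono_tendsto (1 : ℝ)
  have hgu : Tendsto (fun n => g (u n)) atTop (𝓝 (g 1)) :=
    (hgc.tendsto 1).comp hu_tend
  have e1 : ∀ᶠ n in atTop, H N + 2 < g (u n) :=
    hgu.eventually (eventually_gt_nhds (by linarith))
  have e2 : ∀ᶠ n in atTop, w < u n := hu_tend.eventually (eventually_gt_nhds hw1)
  have e3 : ∀ᶠ n in atTop, c < u n := hu_tend.eventually (eventually_gt_nhds hc)
  obtain ⟨n, ⟨hn1, hn2⟩, hn3⟩ := ((e1.and e2).and e3).exists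
  set z := u n with hz
  have hz1 : z < 1 := hu_lt n
  have hz0 : 0 < z := lt_trans hw0 hn2
  -- pick N'
  obtain ⟨N', hN'⟩ : ∃ N', M ≤ N' ∧ z ^ (N' + 1) ≤ 1 - z := by
    have ht : Tendsto (fun n : ℕ => z ^ n) atTop (𝓝 0) :=
      tendsto_pow_atTop_nhds_zero_of_lt_one hz0.le hz1
    have := (ht.comp (tendsto_add_atTop_nat 1)).eventually (eventually_le_nhds (by linarith : (0:ℝ) < 1 - z))
    exact ((eventually_ge_atTop M).and this).exists
  refine ⟨(N', z), lt_of_lt_of_le hM.1 hN'.1, hn2, hz1, hn3, hN'.2, ?_⟩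
  calc H N + 2 ≤ g z := hn1.le
    _ ≤ ∑ m ∈ Finset.Ico N N', z ^ (α (m + 1)) / (m + 1) := by
        apply Finset.sum_le_sum_of_subset_of_nonneg
        · exact Finset.Ico_subset_Ico le_rfl hN'.1
        · intro m _ _; positivity

variable (α : ℕ → ℕ)

noncomputable def S : ℕ → ℕ × ℝ
  | 0 => (0, 1/2)
  | k + 1 =>
      if h : 0 < (S k).2 ∧ (S k).2 < 1 ∧ (1 - 1/(k+2) : ℝ) < 1 then
        (exists_step α (S k).1 (S k).2 (1 - 1/(k+2)) h.1 h.2.1 h.2.2).choose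
      else ((S k).1 + 1, 1/2)

lemma S_inv : ∀ k, 0 < (S α k).2 ∧ (S α k).2 < 1 := by
  intro k
  induction k with
  | zero => norm_num [S]
  | succ k ih =>
      have hc : (1 - 1/(k+2) : ℝ) < 1 := by
        have : (0:ℝ) < 1/(k+2) := by positivity
        linarith
      have h : 0 < (S α k).2 ∧ (S α k).2 < 1 ∧ (1 - 1/(k+2) : ℝ) < 1 := ⟨ih.1, ih.2, hc⟩
      have hs := (exists_step α (S α k).1 (S α k).2 (1 - 1/(k+2)) h.1 h.2.1 h.2.2).choose_spec
      rw [S, dif_pos h]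
      exact ⟨lt_trans ih.1 hs.2.1, hs.2.2.1⟩

lemma S_spec (k : ℕ) :
    (S α k).1 < (S α (k+1)).1 ∧ (S α k).2 < (S α (k+1)).2 ∧ (S α (k+1)).2 < 1 ∧
    (1 - 1/(k+2) : ℝ) < (S α (k+1)).2 ∧
    (S α (k+1)).2 ^ ((S α (k+1)).1 + 1) ≤ 1 - (S α (k+1)).2 ∧
    H (S α k).1 + 2 ≤
      ∑ m ∈ Finset.Ico (S α k).1 (S α (k+1)).1, (S α (k+1)).2 ^ (α (m + 1)) / (m + 1) := by
  have ih := S_inv α k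
  have hc : (1 - 1/(k+2) : ℝ) < 1 := by
    have : (0:ℝ) < 1/(k+2) := by positivity
    linarith
  have h : 0 < (S α k).2 ∧ (S α k).2 < 1 ∧ (1 - 1/(k+2) : ℝ) < 1 := ⟨ih.1, ih.2, hc⟩
  have hs := (exists_step α (S α k).1 (S α k).2 (1 - 1/(k+2)) h.1 h.2.1 h.2.2).choose_spec
  rw [S, dif_pos h]
  exact ⟨hs.1, hs.2.1, hs.2.2.1, hs.2.2.2.1, hs.2.2.2.2.1, hs.2.2.2.2.2⟩

lemma N_strictMono : StrictMono (fun k => (S α k).1) :=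
  strictMono_nat_of_lt_succ fun k => (S_spec α k).1

lemma le_N (j : ℕ) : j ≤ (S α j).1 := (N_strictMono α).le_apply

noncomputable def K (j : ℕ) : ℕ := Nat.find (⟨j, le_N α j⟩ : ∃ k, j ≤ (S α k).1)

lemma K_eq {k j : ℕ} (h1 : (S α k).1 < j) (h2 : j ≤ (S α (k+1)).1) : K α j = k + 1 := by
  rw [K, Nat.find_eq_iff]
  refine ⟨h2, fun i hi hij => ?_⟩
  have : (S α i).1 ≤ (S α k).1 := (N_strictMono α).monotone (Nat.lt_succ_iff.mp hi)
  omega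

noncomputable def β (j : ℕ) : ℝ := if j = 0 then 0 else (-1)^(K α j + 1) / j

lemma abs_β (m : ℕ) : |β α (m+1)| = 1 / (m+1) := by
  rw [β, if_neg (Nat.succ_ne_zero m), abs_div, abs_pow, abs_neg, abs_one, one_pow]
  norm_num
  positivity

lemma summable_aux (hα : ∀ m : ℕ, 1 ≤ m → m ≤ α m) (z : ℝ) (hz : |z| < 1) :
    Summable fun m : ℕ => β α (m + 1) * z ^ α (m + 1) := by
  apply Summable.of_abs
  apply Summable.of_nonneg_of_le (fun m => abs_nonneg _) (fun m => ?_)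
    (summable_geometric_of_lt_one (abs_nonneg z) hz)
  rw [abs_mul, abs_pow]
  calc |β α (m+1)| * |z| ^ (α (m+1)) ≤ 1 * |z| ^ (m+1) := by
        apply mul_le_mul
        · rw [abs_β]
          rw [div_le_one (by positivity)]
          norm_num
        · exact pow_le_pow_of_le_one (abs_nonneg z) hz.le (hα (m+1) (Nat.succ_le_succ (Nat.zero_le m)))
        · positivity
        · norm_num
    _ ≤ |z| ^ m := by
        rw [one_mul]
        exact pow_le_pow_of_le_one (abs_nonneg z) hz.le (Nat.le_succ m)

lemma main_est (hα : ∀ m : ℕ, 1 ≤ m → m ≤ α m) (j : ℕ) :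
    1 ≤ (-1:ℝ)^j * ∑' m : ℕ, β α (m+1) * (S α (j+1)).2 ^ α (m+1) := by
  set z := (S α (j+1)).2 with hzdef
  set N1 := (S α j).1
  set N2 := (S α (j+1)).1
  have hz0 : 0 < z := (S_inv α (j+1)).1
  have hz1 : z < 1 := (S_inv α (j+1)).2
  have hza : |z| < 1 := by rwa [abs_of_pos hz0]
  set f : ℕ → ℝ := fun m => β α (m+1) * z ^ α (m+1) with hf
  have hsum : Summable f := summable_aux α hα z hza
  have hN12 : N1 ≤ N2 := ((S_spec α j).1).le
  have hsplit : ∑' m, f m = (∑ m ∈ Finset.range N1, f m)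
      + (∑ m ∈ Finset.Ico N1 N2, f m) + ∑' m, f (m + N2) := by
    rw [← Summable.sum_add_tsum_nat_add N2 hsum, Finset.range_eq_Ico,
      ← Finset.sum_Ico_consecutive f (Nat.zero_le N1) hN12, Finset.range_eq_Ico]
  -- A bound
  have hA : |∑ m ∈ Finset.range N1, f m| ≤ H N1 := by
    calc |∑ m ∈ Finset.range N1, f m| ≤ ∑ m ∈ Finset.range N1, |f m| :=
          Finset.abs_sum_le_sum_abs _ _
      _ ≤ H N1 := by
          apply Finset.sum_le_sum
          intro m _
          rw [hf, abs_mul, abs_pow, abs_of_pos hz0, abs_β]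
          calc 1/((m:ℝ)+1) * z ^ α (m+1) ≤ 1/((m:ℝ)+1) * 1 := by
                apply mul_le_mul_of_nonneg_left (pow_le_one₀ hz0.le hz1.le) (by positivity)
            _ = 1/((m:ℝ)+1) := mul_one _
  -- B identity
  have hB : ∑ m ∈ Finset.Ico N1 N2, f m
      = (-1:ℝ)^j * ∑ m ∈ Finset.Ico N1 N2, z ^ α (m+1) / (m+1) := by
    rw [Finset.mul_sum]
    apply Finset.sum_congr rfl
    intro m hm
    rw [Finset.mem_Ico] at hm
    have hK : K α (m+1) = j + 1 := K_eq α (Nat.lt_succ_of_le hm.1) (Nat.succ_le_of_lt hm.2)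
    simp only [hf, β]
    rw [if_neg (Nat.succ_ne_zero m), hK]
    have : (-1:ℝ)^(j+1+1) = (-1:ℝ)^j := by
      rw [pow_succ, pow_succ]; ring
    rw [this]
    push_cast
    ring
  have hBval : H N1 + 2 ≤ ∑ m ∈ Finset.Ico N1 N2, z ^ α (m+1) / (m+1) := (S_spec α j).2.2.2.2.2
  -- T bound
  have hT : |∑' m, f (m + N2)| ≤ 1 := by
    have hg : Summable (fun m : ℕ => z ^ (m + N2 + 1)) := by
      have := (summable_geometric_of_lt_one hz0.le hz1).mul_left (z ^ (N2+1))
      apply this.congr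
      intro m
      rw [← pow_add]
      ring_nf
    have habs : ∀ m : ℕ, |f (m + N2)| ≤ z ^ (m + N2 + 1) := by
      intro m
      simp only [hf]
      rw [abs_mul, abs_pow, abs_of_pos hz0, abs_β]
      have h0 : (0:ℝ) ≤ ((m+N2 : ℕ):ℝ) := Nat.cast_nonneg _
      have hb1 : (1:ℝ)/(((m+N2 : ℕ):ℝ)+1) ≤ 1 := by
        rw [div_le_one (by positivity)]; linarith
      have hple : z ^ α (m+N2+1) ≤ z ^ (m+N2+1) :=
        pow_le_pow_of_le_one hz0.le hz1.le (hα _ (Nat.succ_le_succ (Nat.zero_le _)))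
      have := mul_le_mul hb1 hple (by positivity) zero_le_one
      rw [one_mul] at this
      exact this
    have hs2 : Summable fun m : ℕ => |f (m + N2)| := by
      have := (hsum.comp_injective (add_left_injective N2)).abs
      simpa [Function.comp] using this
    have h1 : |∑' m, f (m + N2)| ≤ ∑' m : ℕ, z ^ (m + N2 + 1) := by
      have hnorm : Summable fun m : ℕ => ‖f (m + N2)‖ := by
        simpa [Real.norm_eq_abs] using hs2
      calc |∑' m, f (m + N2)| ≤ ∑' m, |f (m + N2)| := by
            simpa [Real.norm_eq_abs] using norm_tsum_le_tsum_norm hnorm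
        _ ≤ ∑' m : ℕ, z ^ (m + N2 + 1) := Summable.tsum_le_tsum habs hs2 hg
    have h2 : ∑' m : ℕ, z ^ (m + N2 + 1) = z ^ (N2+1) * (1-z)⁻¹ := by
      calc ∑' m : ℕ, z ^ (m + N2 + 1) = ∑' m : ℕ, z ^ (N2+1) * z ^ m := by
            apply tsum_congr; intro m; rw [← pow_add]; ring_nf
        _ = z ^ (N2+1) * ∑' m : ℕ, z ^ m := tsum_mul_left
        _ = z ^ (N2+1) * (1-z)⁻¹ := by rw [tsum_geometric_of_lt_one hz0.le hz1]
    have h3 : z ^ (N2+1) * (1-z)⁻¹ ≤ 1 := by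
      have hpos : (0:ℝ) < 1 - z := by linarith
      have hcond := (S_spec α j).2.2.2.2.1
      calc z ^ (N2+1) * (1-z)⁻¹ ≤ (1-z) * (1-z)⁻¹ :=
            mul_le_mul_of_nonneg_right hcond (inv_nonneg.2 hpos.le)
        _ = 1 := mul_inv_cancel₀ (ne_of_gt hpos)
    calc |∑' m, f (m + N2)| ≤ z ^ (N2+1) * (1-z)⁻¹ := h2 ▸ h1
      _ ≤ 1 := h3
  -- combine
  have hsq : (-1:ℝ)^j * (-1:ℝ)^j = 1 := by
    rw [← pow_add]
    exact Even.neg_one_pow ⟨j, rfl⟩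
  have habsj : |(-1:ℝ)^j| = 1 := by
    rw [abs_pow, abs_neg, abs_one, one_pow]
  rw [hsplit, mul_add, mul_add, hB, ← mul_assoc, hsq, one_mul]
  have e1 : (-1:ℝ)^j * ∑ m ∈ Finset.range N1, f m ≥ -(H N1) := by
    have : |(-1:ℝ)^j * ∑ m ∈ Finset.range N1, f m| ≤ H N1 := by
      rw [abs_mul, habsj, one_mul]; exact hA
    linarith [neg_abs_le ((-1:ℝ)^j * ∑ m ∈ Finset.range N1, f m), (abs_le.mp this).1]
  have e3 : (-1:ℝ)^j * ∑' m, f (m + N2) ≥ -1 := by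
    have : |(-1:ℝ)^j * ∑' m, f (m + N2)| ≤ 1 := by
      rw [abs_mul, habsj, one_mul]; exact hT
    linarith [(abs_le.mp this).1]
  linarith

end Stmt1Aux

open Stmt1Aux in
/-- Theorem 3.2 (ii)-(iii) of the paper: the coefficients solving question (Q) can be
chosen with values in `[-1,1]` and with `γ`-sums equal to those of the harmonic sequence. -/
theorem stmt1 (α : ℕ → ℕ) (hα : ∀ m : ℕ, 1 ≤ m → m ≤ α m) :
    ∃ β : ℕ → ℝ,
      (∀ m : ℕ, 1 ≤ m → β m ∈ Set.Icc (-1 : ℝ) 1) ∧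
      (∀ γ : ℝ, 1 < γ →
        (Summable fun m : ℕ => |β (m + 1)| ^ γ) ∧
        (∑' m : ℕ, |β (m + 1)| ^ γ) = ∑' m : ℕ, (1 / (m + 1 : ℝ)) ^ γ) ∧
      (∀ z : ℝ, z ∈ Set.Ioo (-1 : ℝ) 1 →
        Summable fun m : ℕ => β (m + 1) * z ^ α (m + 1)) ∧
      ∃ z : ℕ → ℝ,
        (∀ k : ℕ, 1 ≤ k → z k ∈ Set.Ioo (0 : ℝ) 1) ∧
        (∀ k : ℕ, 1 ≤ k → z k < z (k + 1)) ∧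
        Tendsto z atTop (𝓝 1) ∧
        (∀ k : ℕ, 1 ≤ k → Odd k →
          0 < ∑' m : ℕ, β (m + 1) * z k ^ α (m + 1)) ∧
        (∀ k : ℕ, 1 ≤ k → Even k →
          (∑' m : ℕ, β (m + 1) * z k ^ α (m + 1)) < 0) := by
  refine ⟨Stmt1Aux.β α, ?_, ?_, ?_, fun k => (S α k).2, ?_, ?_, ?_, ?_, ?_⟩
  · -- values in [-1,1]
    intro m hm
    obtain ⟨n, rfl⟩ := Nat.exists_eq_succ_of_ne_zero (by omega : m ≠ 0)
    have h := abs_β α n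
    rw [Set.mem_Icc, ← abs_le, h]
    rw [div_le_one (by positivity)]
    have : (0:ℝ) ≤ (n:ℝ) := Nat.cast_nonneg n
    linarith
  · -- gamma sums
    intro γ hγ
    have heq : (fun m : ℕ => |Stmt1Aux.β α (m + 1)| ^ γ) = fun m : ℕ => (1 / (m + 1 : ℝ)) ^ γ := by
      funext m
      rw [abs_β]
    have base : Summable (fun n : ℕ => 1 / (n : ℝ) ^ γ) := Real.summable_one_div_nat_rpow.2 hγ
    have s1 : Summable (fun n : ℕ => (1 / ((n : ℝ) + 1)) ^ γ) := by
      have h2 : Summable (fun n : ℕ => 1 / (((n + 1 : ℕ)) : ℝ) ^ γ) :=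
        (summable_nat_add_iff 1).2 base
      apply h2.congr
      intro n
      rw [one_div, one_div, ← Real.inv_rpow (by positivity)]
      push_cast
      ring_nf
    constructor
    · rw [heq]; exact s1
    · rw [heq]
  · -- summability on (-1,1)
    intro z hz
    exact summable_aux α hα z (abs_lt.2 ⟨hz.1, hz.2⟩)
  · -- z k in (0,1)
    intro k _
    exact ⟨(S_inv α k).1, (S_inv α k).2⟩
  · -- strictly increasing
    intro k _
    exact (S_spec α k).2.1
  · -- tendsto 1
    have hlow : ∀ k : ℕ, 1 - 1 / ((k : ℝ) + 1) ≤ (S α k).2 := by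
      intro k
      cases k with
      | zero => norm_num [S]
      | succ k =>
          have := (S_spec α k).2.2.2.1
          have he : (1 : ℝ) - 1 / ((k : ℝ) + 2) = 1 - 1 / (((k + 1 : ℕ) : ℝ) + 1) := by
            push_cast; ring
          rw [he] at this
          exact this.le
    have hub : ∀ k : ℕ, (S α k).2 ≤ 1 := fun k => (S_inv α k).2.le
    have hl : Tendsto (fun k : ℕ => 1 - 1 / ((k : ℝ) + 1)) atTop (𝓝 1) := by
      have h := Tendsto.sub
        (tendsto_const_nhds : Tendsto (fun _ : ℕ => (1:ℝ)) atTop (𝓝 1))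
        tendsto_one_div_add_atTop_nhds_zero_nat
      simpa using h
    exact tendsto_of_tendsto_of_tendsto_of_le_of_le hl tendsto_const_nhds hlow hub
  · -- odd
    intro k hk hodd
    obtain ⟨j, rfl⟩ := Nat.exists_eq_succ_of_ne_zero (by omega : k ≠ 0)
    have hev : Even j := by
      rw [Nat.even_iff]; rw [Nat.odd_iff] at hodd; omega
    have h1 := main_est α hα j
    rw [hev.neg_one_pow, one_mul] at h1
    linarith
  · -- even
    intro k hk heven
    obtain ⟨j, rfl⟩ := Nat.exists_eq_succ_of_ne_zero (by omega : k ≠ 0)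
    have hodd : Odd j := by
      rw [Nat.odd_iff]; rw [Nat.even_iff] at heven; omega
    have h1 := main_est α hα j
    rw [hodd.neg_one_pow, neg_one_mul] at h1
    linarith
end

section
/- Let α : ℕ → ℕ (indexed by m = 1, 2, 3, …) satisfy α_m ≥ m for all m, and let z₁ ∈ (0,1). Then there exist sequences β : ℕ → ℝ, z : ℕ → ℝ, and p, q, r : ℕ → ℕ with p_1 = q_1 = r_1 = 1, β_1 = 1, and z_1 equal to the given value, such that for every k ≥ 1: (i) z_k ∈ (0,1); (ii) z_{k+1} > z_k; (iii) p_{k+1} > q_k; (iv) q_{k+1} > p_{k+1}; (v) r_{k+1} > r_k; (vi) β_m ∈ [-1,1] for all 1 ≤ m ≤ q_k; (vii) β_m = 0 for all m with q_k < m < p_{k+1}; (viii) ∑_{m=1}^{q_k} |β_m|^γ = ∑_{m=1}^{r_k} (1/m)^γ for every γ ∈ [1,∞); (ix) ∑_{m=1}^{q_k} β_m z_k^{α_m} > 0 if k is odd and ∑_{m=1}^{q_k} β_m z_k^{α_m} < 0 if k is even; and (x) |∑_{m=1}^{q_k} β_m z_k^{α_m}| > ∑_{m=p_{k+1}}^∞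 z_k^{α_m} > 0 (the latter tail series converging). -/
open Filter Topology

namespace Stmt3Aux
structure St where
  p : ℕ
  q : ℕ
  r : ℕ
  z : ℝ
  b : ℕ → ℝ

/-- Invariants of the state at stage `k`. -/
structure Inv (α : ℕ → ℕ) (k : ℕ) (s : St) : Prop where
  hp : 1 ≤ s.p
  hpq : s.p ≤ s.q
  hr : 1 ≤ s.r
  hkq : k ≤ s.q
  hz : s.z ∈ Set.Ioo (0:ℝ) 1
  hsupp : ∀ m, s.q < m → s.b m = 0
  hbdd : ∀ m, 1 ≤ m → m ≤ s.q → s.b m ∈ Set.Icc (-1:ℝ) 1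
  hpow : ∀ γ : ℝ, 1 ≤ γ →
    ∑ m ∈ Finset.Icc 1 s.q, |s.b m| ^ γ = ∑ m ∈ Finset.Icc 1 s.r, ((1:ℝ)/m) ^ γ
  hTodd : Odd k → 0 < ∑ m ∈ Finset.Icc 1 s.q, s.b m
  hTeven : Even k → ∑ m ∈ Finset.Icc 1 s.q, s.b m < 0
  hSodd : Odd k → 0 < ∑ m ∈ Finset.Icc 1 s.q, s.b m * s.z ^ α m
  hSeven : Even k → ∑ m ∈ Finset.Icc 1 s.q, s.b m * s.z ^ α m < 0

/-- Relation between consecutive states. -/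
structure Ext (α : ℕ → ℕ) (s s' : St) : Prop where
  hz : s.z < s'.z
  hqp : s.q < s'.p
  hpq : s'.p < s'.q
  hr : s.r < s'.r
  hagree : ∀ m, m ≤ s.q → s'.b m = s.b m
  hgap : ∀ m, s.q < m → m < s'.p → s'.b m = 0
  hsummable : Summable (fun m : ℕ => s.z ^ α (m + s'.p))
  htpos : 0 < ∑' m : ℕ, s.z ^ α (m + s'.p)
  htlt : (∑' m : ℕ, s.z ^ α (m + s'.p)) < |∑ m ∈ Finset.Icc 1 s.q, s.b m * s.z ^ α m|

lemma sum_shift (g : ℕ → ℝ) (p a n : ℕ) :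
    ∑ m ∈ Finset.Icc p (p+n), g (a + (m - p)) = ∑ j ∈ Finset.Icc a (a+n), g j := by
  rw [← Finset.Ico_add_one_right_eq_Icc, ← Finset.Ico_add_one_right_eq_Icc, Finset.sum_Ico_eq_sum_range,
    Finset.sum_Ico_eq_sum_range]
  have h1 : p + n + 1 - p = n + 1 := by omega
  have h2 : a + n + 1 - a = n + 1 := by omega
  rw [h1, h2]
  refine Finset.sum_congr rfl fun i _ => ?_
  congr 1
  omega

lemma sum_gap (f : ℕ → ℝ) (q p' q' : ℕ) (hq : q < p') (hp : p' ≤ q')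
    (h0 : ∀ m, q < m → m < p' → f m = 0) :
    ∑ m ∈ Finset.Icc 1 q', f m = (∑ m ∈ Finset.Icc 1 q, f m) + ∑ m ∈ Finset.Icc p' q', f m := by
  have e1 : Finset.Icc 1 q' = Finset.Ioc 0 q' := Finset.Icc_add_one_left_eq_Ioc 0 q'
  have e2 : Finset.Icc 1 q = Finset.Ioc 0 q := Finset.Icc_add_one_left_eq_Ioc 0 q
  rw [e1, e2, ← Finset.sum_Ioc_consecutive f (Nat.zero_le q) (by omega)]
  congr 1
  rw [← Finset.sum_subset (Finset.Icc_subset_Ioc_iff ?_ |>.2 ⟨by omega, le_rfl⟩ : Finset.Icc p' q' ⊆ Finset.Ioc q q')]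
  · intro x hx hx'
    rw [Finset.mem_Ioc] at hx
    rw [Finset.mem_Icc, not_and_or, not_le, not_le] at hx'
    rcases hx' with h | h
    · exact h0 x hx.1 h
    · omega
  · exact_mod_cast by omega

lemma tail_facts {z : ℝ} (hz0 : 0 < z) (hz1 : z < 1) (α : ℕ → ℕ)
    (hα : ∀ m, 1 ≤ m → m ≤ α m) (p : ℕ) (hp : 1 ≤ p) :
    Summable (fun m : ℕ => z ^ α (m + p)) ∧ 0 < (∑' m : ℕ, z ^ α (m + p)) ∧
      (∑' m : ℕ, z ^ α (m + p)) ≤ z ^ p / (1 - z) := by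
  have key : ∀ m : ℕ, z ^ α (m + p) ≤ z ^ p * z ^ m := by
    intro m
    rw [← pow_add]
    exact pow_le_pow_of_le_one hz0.le hz1.le
      (le_trans (by omega) (hα (m + p) (by omega)))
  have hgeo : Summable (fun m : ℕ => z ^ p * z ^ m) :=
    (summable_geometric_of_lt_one hz0.le hz1).mul_left _
  have hnn : ∀ m : ℕ, 0 ≤ z ^ α (m + p) := fun m => pow_nonneg hz0.le _
  have hsum : Summable (fun m : ℕ => z ^ α (m + p)) :=
    Summable.of_nonneg_of_le hnn key hgeo
  refine ⟨hsum, Summable.tsum_pos hsum hnn 0 (pow_pos hz0 _), ?_⟩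
  calc (∑' m : ℕ, z ^ α (m + p)) ≤ ∑' m : ℕ, z ^ p * z ^ m := Summable.tsum_le_tsum key hsum hgeo
    _ = z ^ p * (1 - z)⁻¹ := by rw [tsum_mul_left, tsum_geometric_of_lt_one hz0.le hz1]
    _ = z ^ p / (1 - z) := (div_eq_mul_inv _ _).symm

lemma harm_div (r : ℕ) (C : ℝ) :
    ∃ N : ℕ, r + 2 ≤ N ∧ C < ∑ j ∈ Finset.Icc (r+1) N, (1:ℝ)/j := by
  set H : ℕ → ℝ := fun n => ∑ i ∈ Finset.range n, (1:ℝ)/(i+1) with hH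
  have hIcc : ∀ n : ℕ, ∑ j ∈ Finset.Icc 1 n, (1:ℝ)/j = H n := by
    intro n
    rw [← Finset.Ico_add_one_right_eq_Icc, Finset.sum_Ico_eq_sum_range]
    simp only [hH, Nat.add_sub_cancel]
    refine Finset.sum_congr rfl fun i _ => by push_cast; ring
  have htend : Tendsto H atTop atTop := Real.tendsto_sum_range_one_div_nat_succ_atTop
  have := (htend.eventually_gt_atTop (C + H r)).and (eventually_ge_atTop (r+2))
  obtain ⟨N, hN1, hN2⟩ := this.exists
  refine ⟨N, hN2, ?_⟩
  have hsplit : H r + ∑ j ∈ Finset.Icc (r+1) N, (1:ℝ)/j = H N := by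
    rw [← hIcc N, ← hIcc r]
    rw [show Finset.Icc 1 N = Finset.Ioc 0 N from Finset.Icc_add_one_left_eq_Ioc 0 N,
      show Finset.Icc 1 r = Finset.Ioc 0 r from Finset.Icc_add_one_left_eq_Ioc 0 r,
      show Finset.Icc (r+1) N = Finset.Ioc r N from Finset.Icc_add_one_left_eq_Ioc r N]
    exact Finset.sum_Ioc_consecutive _ (Nat.zero_le r) (by omega)
  linarith

lemma pick_z (f : ℝ → ℝ) (hf : Continuous f) (T : ℝ) (hfT : f 1 = T) (hT : T ≠ 0)
    (a : ℝ) (ha : a < 1) : ∃ z', a < z' ∧ z' < 1 ∧ |f z' - T| < |T| := by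
  have hopen : IsOpen {x : ℝ | |f x - T| < |T|} :=
    isOpen_lt ((hf.sub continuous_const).abs) continuous_const
  have hmem : (1:ℝ) ∈ {x : ℝ | |f x - T| < |T|} := by
    simp [hfT, abs_pos.2 hT]
  have h1 : ∀ᶠ x in 𝓝[<] (1:ℝ), |f x - T| < |T| :=
    mem_nhdsWithin_of_mem_nhds (hopen.mem_nhds hmem)
  have h2 : ∀ᶠ x in 𝓝[<] (1:ℝ), a < x :=
    mem_nhdsWithin_of_mem_nhds (isOpen_Ioi.mem_nhds ha)
  have h3 : ∀ᶠ x in 𝓝[<] (1:ℝ), x < 1 := eventually_mem_nhdsWithin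
  obtain ⟨z', ⟨hz1, hz2⟩, hz3⟩ := ((h2.and h3).and h1).exists
  exact ⟨z', hz1, hz2, hz3⟩


theorem step_exists (α : ℕ → ℕ) (hα : ∀ m, 1 ≤ m → m ≤ α m) (k : ℕ) (hk : 1 ≤ k)
    (s : St) (hs : Inv α k s) : ∃ s', Inv α (k+1) s' ∧ Ext α s s' := by
  obtain ⟨hz0, hz1⟩ := hs.hz
  set S := ∑ m ∈ Finset.Icc 1 s.q, s.b m * s.z ^ α m with hSdef
  set T := ∑ m ∈ Finset.Icc 1 s.q, s.b m with hTdef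
  have hSne : S ≠ 0 := by
    rcases Nat.even_or_odd k with he | ho
    · exact ne_of_lt (hs.hSeven he)
    · exact (hs.hSodd ho).ne'
  have hTne : T ≠ 0 := by
    rcases Nat.even_or_odd k with he | ho
    · exact ne_of_lt (hs.hTeven he)
    · exact (hs.hTodd ho).ne'
  have h1z : 0 < 1 - s.z := by linarith
  -- choose p'
  have hev : ∀ᶠ n in atTop, s.z ^ n < |S| * (1 - s.z) :=
    (tendsto_pow_atTop_nhds_zero_of_lt_one hz0.le hz1).eventually_lt_const
      (mul_pos (abs_pos.2 hSne) h1z)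
  obtain ⟨p', hp'ev, hqp'⟩ := (hev.and (eventually_ge_atTop (s.q + 1))).exists
  obtain ⟨htailsum, htailpos, htaille⟩ := tail_facts hz0 hz1 α hα p' (by omega)
  have htlt : (∑' m : ℕ, s.z ^ α (m + p')) < |S| :=
    lt_of_le_of_lt htaille (by rw [div_lt_iff₀ h1z]; exact hp'ev)
  -- choose the new block
  set σ : ℝ := if Odd k then -1 else 1 with hσdef
  have hσ1 : |σ| = 1 := by rcases Nat.even_or_odd k with he | ho <;>
    simp [hσdef, Nat.odd_iff, Nat.even_iff] at * <;> simp [*]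
  obtain ⟨N, hN2, hNsum⟩ := harm_div s.r |T|
  set H := ∑ j ∈ Finset.Icc (s.r + 1) N, (1:ℝ)/j with hHdef
  set n := N - s.r - 1 with hndef
  have hn1 : 1 ≤ n := by omega
  have hr1N : s.r + 1 + n = N := by omega
  set b' : ℕ → ℝ := fun m =>
    if m ≤ s.q then s.b m else if m < p' then 0
    else if m ≤ p' + n then σ / ((s.r + 1 + (m - p') : ℕ) : ℝ) else 0 with hb'def
  have hagree : ∀ m, m ≤ s.q → b' m = s.b m := fun m hm => by simp [hb'def, hm]
  have hgap : ∀ m, s.q < m → m < p' → b' m = 0 := fun m h1 h2 => by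
    simp [hb'def, h2]; omega
  have hblock : ∀ m ∈ Finset.Icc p' (p' + n),
      b' m = σ / ((s.r + 1 + (m - p') : ℕ) : ℝ) := by
    intro m hm
    rw [Finset.mem_Icc] at hm
    have h1 : ¬ m ≤ s.q := by omega
    have h2 : ¬ m < p' := by omega
    simp [hb'def, h1, h2, hm.2]
  -- block sums
  have hbsum : ∀ F : ℝ → ℝ, ∑ m ∈ Finset.Icc p' (p' + n), F (b' m)
      = ∑ j ∈ Finset.Icc (s.r + 1) N, F (σ / (j : ℝ)) := by
    intro F
    rw [Finset.sum_congr rfl (fun m hm => by rw [hblock m hm]), ← hr1N]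
    exact sum_shift (fun j => F (σ / (j : ℝ))) p' (s.r + 1) n
  -- sum of the new coefficients
  have hTblock : ∑ m ∈ Finset.Icc p' (p' + n), b' m = σ * H := by
    have := hbsum id
    simp only [id] at this
    rw [this, hHdef, Finset.mul_sum]
    exact Finset.sum_congr rfl fun j _ => by rw [mul_one_div]
  set q' := p' + n with hq'def
  set T' := ∑ m ∈ Finset.Icc 1 q', b' m with hT'def
  have hsplitT : T' = T + σ * H := by
    rw [hT'def, sum_gap b' s.q p' q' (by omega) (by omega) hgap,
      Finset.sum_congr rfl (fun m hm => hagree m (Finset.mem_Icc.mp hm).2), ← hTdef, hTblock]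
  have hTH : |T| < H := hNsum
  -- sign of T'
  have hT'odd : Odd (k+1) → 0 < T' := by
    intro h
    have hek : Even k := by rw [Nat.odd_iff] at h; rw [Nat.even_iff]; omega
    have hσ : σ = 1 := by
      have : ¬ Odd k := by rw [Nat.odd_iff]; rw [Nat.even_iff] at hek; omega
      simp [hσdef, this]
    have := hs.hTeven hek
    rw [hsplitT, hσ, one_mul]
    have : -T ≤ |T| := neg_le_abs T
    linarith
  have hT'even : Even (k+1) → T' < 0 := by
    intro h
    have hok : Odd k := by rw [Nat.even_iff] at h; rw [Nat.odd_iff]; omega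
    have hσ : σ = -1 := by simp [hσdef, hok]
    have := hs.hTodd hok
    rw [hsplitT, hσ, neg_one_mul]
    have : T ≤ |T| := le_abs_self T
    linarith
  have hT'ne : T' ≠ 0 := by
    rcases Nat.even_or_odd (k+1) with he | ho
    · exact ne_of_lt (hT'even he)
    · exact (hT'odd ho).ne'
  -- choose z'
  set f : ℝ → ℝ := fun x => ∑ m ∈ Finset.Icc 1 q', b' m * x ^ α m with hfdef
  have hfc : Continuous f := by
    apply continuous_finset_sum
    exact fun m _ => continuous_const.mul (continuous_pow _)
  have hf1 : f 1 = T' := by simp [hfdef, hT'def]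
  obtain ⟨z', hz'a, hz'1, hz'near⟩ := pick_z f hfc T' hf1 hT'ne s.z hz1
  have hz'0 : 0 < z' := lt_trans hz0 hz'a
  have habs := abs_lt.mp hz'near
  have hS'odd : Odd (k+1) → 0 < f z' := by
    intro h
    have h1 := hT'odd h
    have h2 : |T'| = T' := abs_of_pos h1
    linarith [habs.1, h2 ▸ habs.1]
  have hS'even : Even (k+1) → f z' < 0 := by
    intro h
    have h1 := hT'even h
    have h2 : |T'| = -T' := abs_of_neg h1
    nlinarith [habs.2]
  -- assemble
  have hkq'' : k + 1 ≤ q' := by have := hs.hkq; omega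
  refine ⟨⟨p', q', N, z', b'⟩, ?_, ?_⟩
  · refine ⟨show 1 ≤ p' by omega, show p' ≤ q' by omega, show 1 ≤ N by omega,
      hkq'', ⟨hz'0, hz'1⟩, ?_, ?_, ?_, hT'odd, hT'even, hS'odd, hS'even⟩
    · show ∀ m, q' < m → b' m = 0
      intro m hm
      have h1 : ¬ m ≤ s.q := by omega
      have h2 : ¬ m < p' := by omega
      have h3 : ¬ m ≤ q' := by omega
      simp [hb'def, h1, h2, h3]
    · show ∀ m, 1 ≤ m → m ≤ q' → b' m ∈ Set.Icc (-1:ℝ) 1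
      intro m h1 h2
      by_cases hm1 : m ≤ s.q
      · rw [hagree m hm1]; exact hs.hbdd m h1 hm1
      · by_cases hm2 : m < p'
        · rw [hgap m (by omega) hm2]; constructor <;> norm_num
        · have hm3 : m ≤ q' := h2
          rw [hblock m (Finset.mem_Icc.mpr ⟨by omega, hm3⟩)]
          have hj : (1:ℝ) ≤ ((s.r + 1 + (m - p') : ℕ) : ℝ) := by
            exact_mod_cast Nat.one_le_iff_ne_zero.mpr (by omega)
          rw [Set.mem_Icc, ← abs_le, abs_div, hσ1]
          rw [abs_of_pos (by linarith : (0:ℝ) < ((s.r + 1 + (m - p') : ℕ) : ℝ))]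
          rw [div_le_one (by linarith)]
          exact hj
    · show ∀ γ : ℝ, 1 ≤ γ → ∑ m ∈ Finset.Icc 1 q', |b' m| ^ γ
          = ∑ m ∈ Finset.Icc 1 N, ((1:ℝ)/m) ^ γ
      intro γ hγ
      have hγ0 : γ ≠ 0 := by linarith
      have hLsplit : ∑ m ∈ Finset.Icc 1 q', |b' m| ^ γ
          = (∑ m ∈ Finset.Icc 1 s.q, |s.b m| ^ γ)
            + ∑ j ∈ Finset.Icc (s.r + 1) N, ((1:ℝ)/j) ^ γ := by
        rw [sum_gap (fun m => |b' m| ^ γ) s.q p' q' (by omega) (by omega)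
          (fun m h1 h2 => show |b' m| ^ γ = 0 by
            rw [hgap m h1 h2, abs_zero, Real.zero_rpow hγ0])]
        congr 1
        · exact Finset.sum_congr rfl fun m hm => by
            rw [hagree m (Finset.mem_Icc.mp hm).2]
        · rw [hbsum (fun x => |x| ^ γ)]
          refine Finset.sum_congr rfl fun j hj => ?_
          rw [Finset.mem_Icc] at hj
          have hjpos : (0:ℝ) < (j : ℝ) := by exact_mod_cast by omega
          show |σ / (j:ℝ)| ^ γ = ((1:ℝ)/j) ^ γ
          rw [abs_div, hσ1, abs_of_pos hjpos]
      have hRsplit : ∑ m ∈ Finset.Icc 1 N, ((1:ℝ)/m) ^ γ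
          = (∑ m ∈ Finset.Icc 1 s.r, ((1:ℝ)/m) ^ γ)
            + ∑ j ∈ Finset.Icc (s.r + 1) N, ((1:ℝ)/j) ^ γ :=
        sum_gap _ s.r (s.r + 1) N (by omega) (by omega) (fun m h1 h2 => by omega)
      rw [hLsplit, hRsplit, hs.hpow γ hγ]
  · exact ⟨hz'a, show s.q < p' by omega, show p' < q' by omega, show s.r < N by omega,
      hagree, hgap, htailsum, htailpos, htlt⟩

/-- Initial state. -/
def init (z₁ : ℝ) : St := ⟨1, 1, 1, z₁, fun m => if m = 1 then 1 else 0⟩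

lemma init_inv (α : ℕ → ℕ) (z₁ : ℝ) (hz₁ : z₁ ∈ Set.Ioo (0:ℝ) 1) :
    Inv α 1 (init z₁) := by
  obtain ⟨hz0, hz1⟩ := hz₁
  have hIcc : Finset.Icc 1 1 = ({1} : Finset ℕ) := Finset.Icc_self 1
  refine ⟨le_rfl, le_rfl, le_rfl, le_rfl, ⟨hz0, hz1⟩, ?_, ?_, ?_, ?_, ?_, ?_, ?_⟩
  · show ∀ m, 1 < m → (if m = 1 then (1:ℝ) else 0) = 0
    intro m hm
    rw [if_neg (by omega)]
  · show ∀ m, 1 ≤ m → m ≤ 1 → (if m = 1 then (1:ℝ) else 0) ∈ Set.Icc (-1:ℝ) 1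
    intro m h1 h2
    rw [if_pos (by omega)]
    constructor <;> norm_num
  · show ∀ γ : ℝ, 1 ≤ γ → ∑ m ∈ Finset.Icc (1:ℕ) 1, |if m = 1 then (1:ℝ) else 0| ^ γ
      = ∑ m ∈ Finset.Icc (1:ℕ) 1, ((1:ℝ)/(m:ℝ)) ^ γ
    intro γ hγ
    rw [hIcc]
    simp
  · intro _
    show 0 < ∑ m ∈ Finset.Icc 1 1, (if m = 1 then (1:ℝ) else 0)
    rw [hIcc]
    simp
  · intro h
    exact absurd h (by simp)
  · intro _
    show 0 < ∑ m ∈ Finset.Icc 1 1, (if m = 1 then (1:ℝ) else 0) * z₁ ^ α m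
    rw [hIcc]
    simp only [Finset.sum_singleton]
    norm_num
    exact pow_pos hz0 _
  · intro h
    exact absurd h (by simp)

open Classical in
noncomputable def chain (α : ℕ → ℕ) (hα : ∀ m, 1 ≤ m → m ≤ α m) (z₁ : ℝ) : ℕ → St
  | 0 => init z₁
  | n+1 =>
    if h : Inv α (n+1) (chain α hα z₁ n) then
      (step_exists α hα (n+1) (by omega) (chain α hα z₁ n) h).choose
    else chain α hα z₁ n

lemma chain_inv (α : ℕ → ℕ) (hα : ∀ m, 1 ≤ m → m ≤ α m) (z₁ : ℝ)
    (hz₁ : z₁ ∈ Set.Ioo (0:ℝ) 1) : ∀ n, Inv α (n+1) (chain α hα z₁ n) := by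
  intro n
  induction n with
  | zero => exact init_inv α z₁ hz₁
  | succ n ih =>
    rw [chain, dif_pos ih]
    exact (step_exists α hα (n+1) (by omega) _ ih).choose_spec.1

lemma chain_ext (α : ℕ → ℕ) (hα : ∀ m, 1 ≤ m → m ≤ α m) (z₁ : ℝ)
    (hz₁ : z₁ ∈ Set.Ioo (0:ℝ) 1) :
    ∀ n, Ext α (chain α hα z₁ n) (chain α hα z₁ (n+1)) := by
  intro n
  have ih := chain_inv α hα z₁ hz₁ n
  rw [chain, dif_pos ih]
  exact (step_exists α hα (n+1) (by omega) _ ih).choose_spec.2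

lemma chain_q_mono (α : ℕ → ℕ) (hα : ∀ m, 1 ≤ m → m ≤ α m) (z₁ : ℝ)
    (hz₁ : z₁ ∈ Set.Ioo (0:ℝ) 1) :
    ∀ n j, n ≤ j → (chain α hα z₁ n).q ≤ (chain α hα z₁ j).q := by
  intro n j h
  induction j, h using Nat.le_induction with
  | base => exact le_rfl
  | succ j hj ih =>
    have h1 := (chain_ext α hα z₁ hz₁ j).hqp
    have h2 := (chain_ext α hα z₁ hz₁ j).hpq
    omega

lemma chain_b_stable (α : ℕ → ℕ) (hα : ∀ m, 1 ≤ m → m ≤ α m) (z₁ : ℝ)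
    (hz₁ : z₁ ∈ Set.Ioo (0:ℝ) 1) :
    ∀ n j, n ≤ j → ∀ m, m ≤ (chain α hα z₁ n).q →
      (chain α hα z₁ j).b m = (chain α hα z₁ n).b m := by
  intro n j h
  induction j, h using Nat.le_induction with
  | base => intro m _; rfl
  | succ j hj ih =>
    intro m hm
    rw [(chain_ext α hα z₁ hz₁ j).hagree m (le_trans hm (chain_q_mono α hα z₁ hz₁ n j hj)),
      ih m hm]

end Stmt3Aux

open Stmt3Aux in
/-- Existence form of Lemma 3.1 of the paper: Algorithm 3.1 is executable and its iterates
satisfy conditions (i)-(x). -/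
theorem stmt3 (α : ℕ → ℕ) (hα : ∀ m : ℕ, 1 ≤ m → m ≤ α m)
    (z₁ : ℝ) (hz₁ : z₁ ∈ Set.Ioo (0 : ℝ) 1) :
    ∃ (β : ℕ → ℝ) (z : ℕ → ℝ) (p q r : ℕ → ℕ),
      p 1 = 1 ∧ q 1 = 1 ∧ r 1 = 1 ∧ β 1 = 1 ∧ z 1 = z₁ ∧
      ∀ k : ℕ, 1 ≤ k →
        -- (i)
        z k ∈ Set.Ioo (0 : ℝ) 1 ∧
        -- (ii)
        z k < z (k + 1) ∧
        -- (iii)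
        q k < p (k + 1) ∧
        -- (iv)
        p (k + 1) < q (k + 1) ∧
        -- (v)
        r k < r (k + 1) ∧
        -- (vi)
        (∀ m : ℕ, 1 ≤ m → m ≤ q k → β m ∈ Set.Icc (-1 : ℝ) 1) ∧
        -- (vii)
        (∀ m : ℕ, q k < m → m < p (k + 1) → β m = 0) ∧
        -- (viii)
        (∀ γ : ℝ, 1 ≤ γ →
          (∑ m ∈ Finset.Icc 1 (q k), |β m| ^ γ) =
            ∑ m ∈ Finset.Icc 1 (r k), ((1 : ℝ) / m) ^ γ) ∧
        -- (ix)
        (Odd k → 0 < ∑ m ∈ Finset.Icc 1 (q k), β m * z k ^ α m) ∧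
        (Even k → (∑ m ∈ Finset.Icc 1 (q k), β m * z k ^ α m) < 0) ∧
        -- (x)
        Summable (fun m : ℕ => z k ^ α (m + p (k + 1))) ∧
        0 < ∑' m : ℕ, z k ^ α (m + p (k + 1)) ∧
        (∑' m : ℕ, z k ^ α (m + p (k + 1))) <
          |∑ m ∈ Finset.Icc 1 (q k), β m * z k ^ α m| := by
  set G : ℕ → St := chain α hα z₁ with hG
  have hInv : ∀ n, Inv α (n+1) (G n) := chain_inv α hα z₁ hz₁
  have hExt : ∀ n, Ext α (G n) (G (n+1)) := chain_ext α hα z₁ hz₁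
  set β : ℕ → ℝ := fun m => (G (m-1)).b m with hβdef
  have hβ : ∀ n m, 1 ≤ m → m ≤ (G n).q → β m = (G n).b m := by
    intro n m h1 hm
    have hmq : m ≤ (G (m-1)).q := by
      have := (hInv (m-1)).hkq
      omega
    rcases le_total (m-1) n with h | h
    · exact (chain_b_stable α hα z₁ hz₁ (m-1) n h m hmq).symm
    · exact chain_b_stable α hα z₁ hz₁ n (m-1) h m hm
  refine ⟨β, fun k => (G (k-1)).z, fun k => (G (k-1)).p, fun k => (G (k-1)).q,
    fun k => (G (k-1)).r, rfl, rfl, rfl, by simp [hβdef, hG, chain, init], rfl, ?_⟩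
  intro k hk
  obtain ⟨n, rfl⟩ : ∃ n, k = n + 1 := ⟨k - 1, by omega⟩
  simp only [Nat.add_sub_cancel]
  have hsum : ∑ m ∈ Finset.Icc 1 (G n).q, β m * (G n).z ^ α m
      = ∑ m ∈ Finset.Icc 1 (G n).q, (G n).b m * (G n).z ^ α m := by
    refine Finset.sum_congr rfl fun m hm => ?_
    rw [Finset.mem_Icc] at hm
    rw [hβ n m hm.1 hm.2]
  refine ⟨(hInv n).hz, (hExt n).hz, (hExt n).hqp, (hExt n).hpq, (hExt n).hr, ?_, ?_, ?_,
    ?_, ?_, (hExt n).hsummable, (hExt n).htpos, ?_⟩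
  · intro m h1 h2
    rw [hβ n m h1 h2]
    exact (hInv n).hbdd m h1 h2
  · intro m h1 h2
    have : β m = (G (n+1)).b m := by
      refine hβ (n+1) m (by omega) ?_
      have := (hExt n).hpq
      omega
    rw [this]
    exact (hExt n).hgap m h1 h2
  · intro γ hγ
    have e : ∑ m ∈ Finset.Icc 1 (G n).q, |β m| ^ γ
        = ∑ m ∈ Finset.Icc 1 (G n).q, |(G n).b m| ^ γ := by
      refine Finset.sum_congr rfl fun m hm => ?_
      rw [Finset.mem_Icc] at hm
      rw [hβ n m hm.1 hm.2]
    rw [e]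
    exact (hInv n).hpow γ hγ
  · intro h
    rw [hsum]
    exact (hInv n).hSodd h
  · intro h
    rw [hsum]
    exact (hInv n).hSeven h
  · rw [hsum]
    exact (hExt n).htlt
end

section
/- Let T ∈ ℝ. Then there exist a sequence β : ℕ → ℝ (indexed by m = 1, 2, 3, …) with β_m ∈ [-1,1] for all m and ∑_{m=1}^∞ |β_m|^q < ∞ for every q ∈ (1,∞), and a strictly increasing sequence {t_k}_{k≥1} ⊂ (-∞, T) with t_k → T as k → ∞, such that the function φ : (-∞, T) → ℝ defined by φ(t) := ∑_{m=1}^∞ β_m e^{-m²π²(T-t)} is real-analytic on (-∞, T), satisfies φ(t_k) > 0 for all odd k, and satisfies φ(t_k) < 0 for all even k. -/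
open Filter Topology

namespace Stmt4Aux

noncomputable section

lemma exU (m : ℕ) (lb ε : ℝ) :
    ∃ u : ℝ, 0 < u ∧ u < 1 ∧ (lb < 1 → lb < u) ∧ (0 < ε → 1 - ε < u ^ m) := by
  haveI : (𝓝[<] (1:ℝ)).NeBot := nhdsLT_neBot 1
  have h1 : ∀ᶠ u in 𝓝[<] (1:ℝ), u < 1 := eventually_mem_nhdsWithin
  have h0 : ∀ᶠ u in 𝓝[<] (1:ℝ), (0:ℝ) < u :=
    (eventually_gt_nhds one_pos).filter_mono nhdsWithin_le_nhds
  have h2 : ∀ᶠ u in 𝓝[<] (1:ℝ), lb < 1 → lb < u := by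
    by_cases h : lb < 1
    · exact ((eventually_gt_nhds h).filter_mono nhdsWithin_le_nhds).mono fun u hu _ => hu
    · exact Eventually.of_forall fun u hu => absurd hu h
  have h3 : ∀ᶠ u in 𝓝[<] (1:ℝ), 0 < ε → 1 - ε < u ^ m := by
    by_cases h : 0 < ε
    · have ht0 : Tendsto (fun u : ℝ => u ^ m) (𝓝 (1:ℝ)) (𝓝 ((1:ℝ) ^ m)) :=
        (continuous_pow m).tendsto 1
      rw [one_pow] at ht0
      have ht : Tendsto (fun u : ℝ => u ^ m) (𝓝[<] 1) (𝓝 1) :=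
        ht0.mono_left nhdsWithin_le_nhds
      exact (ht.eventually (eventually_gt_nhds (by linarith : 1 - ε < 1))).mono fun u hu _ => hu
    · exact Eventually.of_forall fun u hu => absurd hu h
  obtain ⟨u, hu⟩ := (((h0.and h1).and (h2.and h3)).exists)
  exact ⟨u, hu.1.1, hu.1.2, hu.2.1, hu.2.2⟩

lemma exM (u : ℝ) (M : ℕ) (ε : ℝ) :
    ∃ m : ℕ, M < m ∧ (0 ≤ u → u < 1 → 0 < ε → u ^ m < ε) := by
  by_cases h : 0 ≤ u ∧ u < 1 ∧ 0 < ε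
  · obtain ⟨h0, h1, hε⟩ := h
    have ht := tendsto_pow_atTop_nhds_zero_of_lt_one h0 h1
    have h2 : ∀ᶠ m : ℕ in atTop, u ^ m < ε := ht.eventually (eventually_lt_nhds hε)
    obtain ⟨m, hm1, hm2⟩ := ((eventually_gt_atTop M).and h2).exists
    exact ⟨m, hm1, fun _ _ _ => hm2⟩
  · exact ⟨M + 1, Nat.lt_succ_self M, fun h0 h1 hε => absurd ⟨h0, h1, hε⟩ h⟩

def Eps (k : ℕ) : ℝ := (1/2) ^ (k+1)

lemma Eps_pos (k : ℕ) : 0 < Eps k := by unfold Eps; positivity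

lemma Eps_le_one (k : ℕ) : Eps k ≤ 1 := by
  unfold Eps
  exact pow_le_one₀ (by norm_num) (by norm_num)

def seqs : ℕ → ℕ × ℝ
  | 0 => (1, (exU 1 (1/2) (Eps 0 / 8)).choose)
  | j+1 =>
    let p := seqs j
    let m' := (exM p.2 p.1 (Eps j / 8)).choose
    (m', (exU (m' ^ 2) p.2 (Eps (j+1) / 8)).choose)

def ms (j : ℕ) : ℕ := (seqs j).1
def us (j : ℕ) : ℝ := (seqs j).2

lemma ms_zero : ms 0 = 1 := rfl

lemma ms_succ (j : ℕ) : ms (j+1) = (exM (us j) (ms j) (Eps j / 8)).choose := rfl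

lemma us_zero : us 0 = (exU 1 (1/2) (Eps 0 / 8)).choose := rfl

lemma us_succ (j : ℕ) :
    us (j+1) = (exU ((ms (j+1)) ^ 2) (us j) (Eps (j+1) / 8)).choose := rfl

lemma us_pos (j : ℕ) : 0 < us j := by
  cases j with
  | zero => exact (exU 1 (1/2) (Eps 0 / 8)).choose_spec.1
  | succ j => exact (exU ((ms (j+1)) ^ 2) (us j) (Eps (j+1) / 8)).choose_spec.1

lemma us_lt_one (j : ℕ) : us j < 1 := by
  cases j with
  | zero => exact (exU 1 (1/2) (Eps 0 / 8)).choose_spec.2.1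
  | succ j => exact (exU ((ms (j+1)) ^ 2) (us j) (Eps (j+1) / 8)).choose_spec.2.1

lemma us_pow_gt (j : ℕ) : 1 - Eps j / 8 < us j ^ ((ms j) ^ 2) := by
  cases j with
  | zero =>
    have h := (exU 1 (1/2) (Eps 0 / 8)).choose_spec.2.2.2
      (by have := Eps_pos 0; linarith)
    rw [us_zero]
    simpa [ms_zero] using h
  | succ j =>
    exact (exU ((ms (j+1)) ^ 2) (us j) (Eps (j+1) / 8)).choose_spec.2.2.2
      (by have := Eps_pos (j+1); linarith)

lemma us_mono (j : ℕ) : us j < us (j+1) :=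
  (exU ((ms (j+1)) ^ 2) (us j) (Eps (j+1) / 8)).choose_spec.2.2.1 (us_lt_one j)

lemma ms_lt (j : ℕ) : ms j < ms (j+1) :=
  (exM (us j) (ms j) (Eps j / 8)).choose_spec.1

lemma ms_strictMono : StrictMono ms := strictMono_nat_of_lt_succ ms_lt

lemma ms_pos (j : ℕ) : 1 ≤ ms j := by
  have := ms_strictMono.monotone (Nat.zero_le j)
  rw [ms_zero] at this
  exact this

lemma us_tail_small (j : ℕ) : us j ^ ((ms (j+1)) ^ 2) < Eps j / 8 := by
  have h := (exM (us j) (ms j) (Eps j / 8)).choose_spec.2 (us_pos j).le (us_lt_one j)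
    (by have := Eps_pos j; linarith)
  rw [← ms_succ] at h
  calc us j ^ ((ms (j+1)) ^ 2) ≤ us j ^ (ms (j+1)) :=
        pow_le_pow_of_le_one (us_pos j).le (us_lt_one j).le
          (Nat.le_self_pow (by norm_num) _)
    _ < Eps j / 8 := h

def c (j : ℕ) : ℝ := if j = 0 then 1/2 else 3 * (1/2) ^ (j+1)

def sg (j : ℕ) : ℝ := (-1) ^ j * c j

lemma c_pos (j : ℕ) : 0 < c j := by unfold c; split <;> positivity

lemma c_le_one (j : ℕ) : c j ≤ 1 := by
  unfold c
  split
  · norm_num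
  · rename_i h
    obtain ⟨i, rfl⟩ := Nat.exists_eq_succ_of_ne_zero h
    have : (1/2 : ℝ) ^ (i.succ+1) ≤ (1/2) ^ 2 :=
      pow_le_pow_of_le_one (by norm_num) (by norm_num) (by omega)
    nlinarith

lemma c_le (j : ℕ) : c j ≤ 3/2 * (1/2) ^ j := by
  unfold c
  split
  · rename_i h; subst h; norm_num
  · rw [pow_succ]; ring_nf; exact le_refl _

lemma abs_sg (j : ℕ) : |sg j| = c j := by
  unfold sg
  rw [abs_mul, abs_pow, abs_neg, abs_one, one_pow, one_mul, abs_of_pos (c_pos j)]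

lemma S_eq (j : ℕ) :
    ∑ i ∈ Finset.range (j+1), sg i = (-1) ^ j * (1/2) ^ (j+1) := by
  induction j with
  | zero => simp [sg, c]
  | succ j ih =>
    rw [Finset.sum_range_succ, ih]
    have hc : c (j+1) = 3 * (1/2) ^ (j+2) := by unfold c; simp
    unfold sg
    rw [hc]
    ring

lemma S_eq' (j : ℕ) :
    ∑ i ∈ Finset.range (j+1), sg i = (-1) ^ j * Eps j := by
  rw [S_eq]; rfl

open Classical in
def A (n : ℕ) : ℝ := if h : ∃ j, (ms j) ^ 2 = n then sg h.choose else 0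

def bβ (n : ℕ) : ℝ := A (n ^ 2)

lemma msInj : Function.Injective ms := ms_strictMono.injective

lemma A_apply (j : ℕ) : A ((ms j) ^ 2) = sg j := by
  have h : ∃ i, (ms i) ^ 2 = (ms j) ^ 2 := ⟨j, rfl⟩
  rw [A, dif_pos h]
  congr 1
  exact msInj (Nat.pow_left_injective (by norm_num) h.choose_spec)

lemma A_eq_zero {n : ℕ} (h : ∀ j, (ms j) ^ 2 ≠ n) : A n = 0 := by
  rw [A, dif_neg]
  rintro ⟨j, hj⟩
  exact h j hj

lemma A_abs_le (n : ℕ) : |A n| ≤ 1 := by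
  rw [A]
  split
  · rw [abs_sg]; exact c_le_one _
  · simp

def P : FormalMultilinearSeries ℝ ℝ ℝ := FormalMultilinearSeries.ofScalars ℝ A

lemma P_norm_le (n : ℕ) : ‖P n‖ ≤ 1 := by
  have : P n = A n • ContinuousMultilinearMap.mkPiAlgebraFin ℝ n ℝ := rfl
  rw [this]
  refine (norm_smul_le (A n) (ContinuousMultilinearMap.mkPiAlgebraFin ℝ n ℝ)).trans ?_
  rw [ContinuousMultilinearMap.norm_mkPiAlgebraFin, mul_one, Real.norm_eq_abs]
  exact A_abs_le n

lemma P_radius : 1 ≤ P.radius := by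
  have h := FormalMultilinearSeries.le_radius_of_bound P 1 (r := 1)
    (fun n => by simpa using P_norm_le n)
  simpa using h

lemma P_sum_eq (x : ℝ) : P.sum x = ∑' n : ℕ, A n * x ^ n := by
  have h := FormalMultilinearSeries.ofScalars_sum_eq (E := ℝ) A x
  simpa [FormalMultilinearSeries.ofScalarsSum, P, smul_eq_mul] using h

lemma analyticAt_Psum {x : ℝ} (hx : |x| < 1) : AnalyticAt ℝ P.sum x := by
  have h0 : (0 : ENNReal) < P.radius := lt_of_lt_of_le (by norm_num) P_radius
  refine (P.hasFPowerSeriesOnBall h0).analyticAt_of_mem ?_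
  rw [EMetric.mem_ball, edist_dist]
  refine lt_of_lt_of_le ?_ P_radius
  rw [Real.dist_eq, sub_zero]
  exact_mod_cast ENNReal.ofReal_lt_one.2 hx

lemma tsum_A_eq (x : ℝ) :
    ∑' n : ℕ, A n * x ^ n = ∑' j : ℕ, sg j * x ^ ((ms j) ^ 2) := by
  have hinj : Function.Injective (fun j : ℕ => (ms j) ^ 2) := fun a b h =>
    msInj (Nat.pow_left_injective (by norm_num) h)
  have hsupp : Function.support (fun n : ℕ => A n * x ^ n) ⊆
      Set.range (fun j : ℕ => (ms j) ^ 2) := by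
    intro n hn
    by_contra hc
    apply hn
    simp only [Set.mem_range] at hc
    push_neg at hc
    simp only [Function.mem_support, ne_eq, not_not]
    rw [A_eq_zero hc, zero_mul]
  have h := hinj.tsum_eq hsupp (f := fun n : ℕ => A n * x ^ n)
  rw [← h]
  exact tsum_congr fun j => by simp only [A_apply]

lemma tsum_beta_eq (x : ℝ) :
    ∑' m : ℕ, bβ (m+1) * x ^ ((m+1) ^ 2) = ∑' n : ℕ, A n * x ^ n := by
  have hinj : Function.Injective (fun m : ℕ => (m+1) ^ 2) := fun a b h => by
    have := Nat.pow_left_injective (n := 2) (by norm_num) h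
    omega
  have hsupp : Function.support (fun n : ℕ => A n * x ^ n) ⊆
      Set.range (fun m : ℕ => (m+1) ^ 2) := by
    intro n hn
    by_contra hc
    apply hn
    simp only [Set.mem_range] at hc
    push_neg at hc
    simp only [Function.mem_support, ne_eq, not_not]
    rw [A_eq_zero, zero_mul]
    intro j hj
    have h1 := ms_pos j
    exact hc (ms j - 1) (by rw [← hj]; congr 1; omega)
  have h := hinj.tsum_eq hsupp (f := fun n : ℕ => A n * x ^ n)
  rw [← h]
  rfl

lemma maj_summable : Summable (fun j : ℕ => 3/2 * (1/2 : ℝ) ^ j) :=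
  (summable_geometric_of_lt_one (by norm_num) (by norm_num)).mul_left _

lemma tsum_maj : ∑' j : ℕ, 3/2 * (1/2 : ℝ) ^ j = 3 := by
  rw [tsum_mul_left, tsum_geometric_of_lt_one (by norm_num) (by norm_num)]
  norm_num

set_option maxHeartbeats 1000000 in
lemma key_est (k : ℕ) :
    |(∑' j : ℕ, sg j * us k ^ ((ms j) ^ 2)) - (-1) ^ k * Eps k| ≤ 3/4 * Eps k := by
  set u := us k with hu
  have hu0 : 0 < u := us_pos k
  have hu1 : u < 1 := us_lt_one k
  have hE8 : 0 < Eps k / 8 := by have := Eps_pos k; linarith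
  set G : ℕ → ℝ := fun j => sg j * u ^ ((ms j) ^ 2) with hG
  have hpow_le_one : ∀ n : ℕ, u ^ n ≤ 1 := fun n => pow_le_one₀ hu0.le hu1.le
  have hpow_nonneg : ∀ n : ℕ, (0:ℝ) ≤ u ^ n := fun n => pow_nonneg hu0.le n
  have hmaj : ∀ j, ‖G j‖ ≤ 3/2 * (1/2) ^ j := by
    intro j
    rw [hG, Real.norm_eq_abs, abs_mul, abs_sg, abs_of_nonneg (hpow_nonneg _)]
    calc c j * u ^ (ms j ^ 2) ≤ c j * 1 := by
          have := c_pos j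
          nlinarith [hpow_le_one (ms j ^ 2)]
      _ ≤ 3/2 * (1/2) ^ j := by rw [mul_one]; exact c_le j
  have hGsum : Summable G := Summable.of_norm_bounded maj_summable hmaj
  have hsplit := Summable.sum_add_tsum_nat_add (k+1) hGsum
  -- front estimate
  have hfront : |(∑ j ∈ Finset.range (k+1), G j) - (-1) ^ k * Eps k| ≤ 3 * (Eps k / 8) := by
    rw [← S_eq' k, ← Finset.sum_sub_distrib]
    refine (Finset.abs_sum_le_sum_abs _ _).trans ?_
    have hterm : ∀ j ∈ Finset.range (k+1), |G j - sg j| ≤ c j * (Eps k / 8) := by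
      intro j hj
      rw [Finset.mem_range] at hj
      have hje : (ms j) ^ 2 ≤ (ms k) ^ 2 :=
        Nat.pow_le_pow_left (ms_strictMono.monotone (by omega)) 2
      have h1 : u ^ ((ms k) ^ 2) ≤ u ^ ((ms j) ^ 2) :=
        pow_le_pow_of_le_one hu0.le hu1.le hje
      have h2 : 1 - Eps k / 8 < u ^ ((ms k) ^ 2) := us_pow_gt k
      have h3 : 1 - u ^ ((ms j) ^ 2) ≤ Eps k / 8 := by linarith
      have : G j - sg j = sg j * (u ^ ((ms j) ^ 2) - 1) := by rw [hG]; ring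
      rw [this, abs_mul, abs_sg]
      have h4 : |u ^ ((ms j) ^ 2) - 1| ≤ Eps k / 8 := by
        rw [abs_sub_comm, abs_of_nonneg (by linarith [hpow_le_one ((ms j) ^ 2)])]
        exact h3
      have := c_pos j
      nlinarith
    refine (Finset.sum_le_sum hterm).trans ?_
    have hsum_c : ∑ j ∈ Finset.range (k+1), c j ≤ 3 := by
      refine le_trans (Finset.sum_le_sum fun j _ => c_le j) ?_
      refine le_trans (Summable.sum_le_tsum _ (fun j _ => by positivity) maj_summable) ?_
      rw [tsum_maj]
    calc ∑ j ∈ Finset.range (k+1), c j * (Eps k / 8)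
        = (∑ j ∈ Finset.range (k+1), c j) * (Eps k / 8) := by
          rw [Finset.sum_mul]
      _ ≤ 3 * (Eps k / 8) := by nlinarith
  -- tail estimate
  have htail : |∑' j : ℕ, G (j + (k+1))| ≤ 3 * (Eps k / 8) := by
    have hGn : Summable (fun j => ‖G j‖) :=
      Summable.of_nonneg_of_le (fun j => norm_nonneg _) hmaj maj_summable
    have hGns : Summable (fun j => ‖G (j + (k+1))‖) :=
      (summable_nat_add_iff (k+1)).2 hGn
    have hbd : ∀ j : ℕ, ‖G (j + (k+1))‖ ≤ 3/2 * (1/2) ^ j * (Eps k / 8) := by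
      intro j
      rw [hG, Real.norm_eq_abs, abs_mul, abs_sg, abs_of_nonneg (hpow_nonneg _)]
      have h1 : c (j + (k+1)) ≤ 3/2 * (1/2) ^ j := by
        refine (c_le _).trans ?_
        have : ((1:ℝ)/2) ^ (j + (k+1)) ≤ (1/2) ^ j :=
          pow_le_pow_of_le_one (by norm_num) (by norm_num) (by omega)
        nlinarith
      have h2 : u ^ ((ms (j + (k+1))) ^ 2) ≤ u ^ ((ms (k+1)) ^ 2) :=
        pow_le_pow_of_le_one hu0.le hu1.le
          (Nat.pow_le_pow_left (ms_strictMono.monotone (by omega)) 2)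
      have h3 : u ^ ((ms (k+1)) ^ 2) < Eps k / 8 := us_tail_small k
      have hc := c_pos (j + (k+1))
      nlinarith [hpow_nonneg ((ms (j + (k+1))) ^ 2), pow_nonneg (by norm_num : (0:ℝ) ≤ 1/2) j]
    refine (norm_tsum_le_tsum_norm hGns).trans ?_
    refine le_trans (Summable.tsum_le_tsum hbd hGns (maj_summable.mul_right _)) ?_
    rw [tsum_mul_right, tsum_maj]
  have hval : (∑' j : ℕ, G j) - (-1) ^ k * Eps k
      = ((∑ j ∈ Finset.range (k+1), G j) - (-1) ^ k * Eps k) + ∑' j : ℕ, G (j + (k+1)) := by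
    rw [← hsplit]; ring
  rw [hval]
  refine (abs_add_le _ _).trans ?_
  linarith

lemma F_eq (T τ : ℝ) :
    (∑' m : ℕ, bβ (m+1) * Real.exp (-((m + 1 : ℝ)) ^ 2 * Real.pi ^ 2 * (T - τ)))
      = P.sum (Real.exp (Real.pi ^ 2 * (τ - T))) := by
  rw [P_sum_eq, ← tsum_beta_eq]
  refine tsum_congr fun m => ?_
  congr 1
  rw [← Real.exp_nat_mul]
  congr 1
  push_cast
  ring

lemma exp_log_eq (T : ℝ) (j : ℕ) :
    Real.exp (Real.pi ^ 2 * ((T + Real.log (us j) / Real.pi ^ 2) - T)) = us j := by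
  have hπ : Real.pi ≠ 0 := Real.pi_ne_zero
  have h : Real.pi ^ 2 * ((T + Real.log (us j) / Real.pi ^ 2) - T) = Real.log (us j) := by
    field_simp
    ring
  rw [h, Real.exp_log (us_pos j)]

lemma val_eq (T : ℝ) (j : ℕ) :
    (∑' m : ℕ, bβ (m+1) * Real.exp (-((m + 1 : ℝ)) ^ 2 * Real.pi ^ 2
      * (T - (T + Real.log (us j) / Real.pi ^ 2))))
      = ∑' i : ℕ, sg i * us j ^ ((ms i) ^ 2) := by
  rw [F_eq, exp_log_eq, P_sum_eq, tsum_A_eq]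

end

end Stmt4Aux

open Stmt4Aux in
/-- PDE-free core of Lemma 4.3 of the paper: a sign-alternating real-analytic function
`φ(t) = ∑ β_m exp(-m²π²(T-t))` on `(-∞, T)` with oscillation points accumulating at `T`. -/
theorem stmt4 (T : ℝ) :
    ∃ (β : ℕ → ℝ) (t : ℕ → ℝ),
      (∀ m : ℕ, 1 ≤ m → β m ∈ Set.Icc (-1 : ℝ) 1) ∧
      (∀ q : ℝ, 1 < q → Summable fun m : ℕ => |β (m + 1)| ^ q) ∧
      (∀ k : ℕ, 1 ≤ k → t k < T) ∧
      (∀ k : ℕ, 1 ≤ k → t k < t (k + 1)) ∧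
      Tendsto t atTop (𝓝 T) ∧
      (∀ s : ℝ, s < T →
        AnalyticAt ℝ
          (fun τ : ℝ =>
            ∑' m : ℕ, β (m + 1) *
              Real.exp (-((m + 1 : ℝ)) ^ 2 * Real.pi ^ 2 * (T - τ))) s) ∧
      (∀ k : ℕ, 1 ≤ k → Odd k →
        0 < ∑' m : ℕ, β (m + 1) *
          Real.exp (-((m + 1 : ℝ)) ^ 2 * Real.pi ^ 2 * (T - t k))) ∧
      (∀ k : ℕ, 1 ≤ k → Even k →
        (∑' m : ℕ, β (m + 1) *
          Real.exp (-((m + 1 : ℝ)) ^ 2 * Real.pi ^ 2 * (T - t k))) < 0) := by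
  have hπ2 : (0:ℝ) < Real.pi ^ 2 := by positivity
  refine ⟨bβ, fun k => T + Real.log (us (k-1)) / Real.pi ^ 2,
    fun m _ => Set.mem_Icc.2 (abs_le.1 (A_abs_le _)), ?_, ?_, ?_, ?_, ?_, ?_, ?_⟩
  · -- summability
    intro q hq
    have hi : Function.Injective (fun j => ms j - 1) := by
      intro a b h
      have ha := ms_pos a; have hb := ms_pos b
      exact msInj (by simp only at h; omega)
    have hz : ∀ m ∉ Set.range (fun j => ms j - 1), |bβ (m+1)| ^ q = 0 := by
      intro m hm
      have hβ : bβ (m+1) = 0 := by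
        rw [bβ]
        apply A_eq_zero
        intro j hj
        have h2 : ms j = m + 1 := Nat.pow_left_injective (n := 2) (by norm_num) hj
        exact absurd ⟨j, show ms j - 1 = m by omega⟩ hm
      rw [hβ, abs_zero, Real.zero_rpow (by linarith)]
    refine (hi.summable_iff hz).1 ?_
    have hsum : Summable (fun j : ℕ => c j ^ q) := by
      refine Summable.of_nonneg_of_le (fun j => Real.rpow_nonneg (c_pos j).le q)
        (fun j => ?_) maj_summable
      calc c j ^ q ≤ c j ^ (1:ℝ) :=
            Real.rpow_le_rpow_of_exponent_ge (c_pos j) (c_le_one j) (by linarith)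
        _ = c j := Real.rpow_one _
        _ ≤ 3/2 * (1/2) ^ j := c_le j
    refine hsum.congr fun j => ?_
    have h1 : ms j - 1 + 1 = ms j := by have := ms_pos j; omega
    simp only [Function.comp_apply]
    rw [h1, bβ, A_apply, abs_sg]
  · -- t k < T
    intro k _
    have h1 : Real.log (us (k-1)) < 0 := Real.log_neg (us_pos _) (us_lt_one _)
    have : Real.log (us (k-1)) / Real.pi ^ 2 < 0 := div_neg_of_neg_of_pos h1 hπ2
    linarith
  · -- monotone
    intro k hk
    have h2 : us (k-1) < us (k+1-1) := by
      have h : k+1-1 = (k-1)+1 := by omega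
      rw [h]
      exact us_mono (k-1)
    have h3 := Real.log_lt_log (us_pos (k-1)) h2
    have h4 := (div_lt_div_iff_of_pos_right hπ2).2 h3
    linarith
  · -- tendsto
    have hEps : Tendsto (fun j : ℕ => (1/2:ℝ) ^ (j+1)) atTop (𝓝 0) :=
      (tendsto_pow_atTop_nhds_zero_of_lt_one (by norm_num) (by norm_num)).comp
        (Filter.tendsto_add_atTop_nat 1)
    have hlow : Tendsto (fun j : ℕ => 1 - (1/2:ℝ) ^ (j+1) / 8) atTop (𝓝 1) := by
      have h := (tendsto_const_nhds : Tendsto (fun _ : ℕ => (1:ℝ)) atTop (𝓝 1)).sub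
        (hEps.div_const 8)
      simpa using h
    have husb : ∀ j, 1 - (1/2:ℝ) ^ (j+1) / 8 ≤ us j := by
      intro j
      have h1 := us_pow_gt j
      have h2 : us j ^ ((ms j) ^ 2) ≤ us j := by
        calc us j ^ ((ms j) ^ 2) ≤ us j ^ 1 :=
              pow_le_pow_of_le_one (us_pos j).le (us_lt_one j).le
                (Nat.one_le_pow _ _ (ms_pos j))
          _ = us j := pow_one _
      have h3 : Eps j = (1/2:ℝ) ^ (j+1) := rfl
      rw [h3] at h1
      linarith
    have hus1 : Tendsto us atTop (𝓝 1) :=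
      tendsto_of_tendsto_of_tendsto_of_le_of_le hlow tendsto_const_nhds husb
        (fun j => (us_lt_one j).le)
    have husk : Tendsto (fun k : ℕ => us (k-1)) atTop (𝓝 1) :=
      hus1.comp (tendsto_sub_atTop_nat 1)
    have hlog : Tendsto (fun k : ℕ => Real.log (us (k-1))) atTop (𝓝 0) := by
      have h := (Real.continuousAt_log one_ne_zero).tendsto.comp husk
      simpa [Real.log_one, Function.comp_def] using h
    have h := (tendsto_const_nhds : Tendsto (fun _ : ℕ => T) atTop (𝓝 T)).add
      (hlog.div_const (Real.pi ^ 2))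
    simpa using h
  · -- analytic
    intro s hs
    have hx : |Real.exp (Real.pi ^ 2 * (s - T))| < 1 := by
      rw [abs_of_pos (Real.exp_pos _), Real.exp_lt_one_iff]
      nlinarith
    have hinner : AnalyticAt ℝ (fun τ : ℝ => Real.pi ^ 2 * (τ - T)) s :=
      analyticAt_const.mul ((analyticAt_id).sub analyticAt_const)
    have hexp : AnalyticAt ℝ (fun τ : ℝ => Real.exp (Real.pi ^ 2 * (τ - T))) s :=
      hinner.rexp
    have houter : AnalyticAt ℝ P.sum (Real.exp (Real.pi ^ 2 * (s - T))) :=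
      analyticAt_Psum hx
    have hcomp := AnalyticAt.comp (g := P.sum)
      (f := fun τ : ℝ => Real.exp (Real.pi ^ 2 * (τ - T))) houter hexp
    refine hcomp.congr (Filter.Eventually.of_forall fun τ => ?_)
    exact (F_eq T τ).symm
  · -- odd: positive
    intro k hk hodd
    rw [val_eq T (k-1)]
    have hest := key_est (k-1)
    have heven : Even (k-1) := Nat.Odd.sub_odd hodd odd_one
    rw [heven.neg_one_pow, one_mul] at hest
    have hE := Eps_pos (k-1)
    have := abs_le.1 hest
    linarith [this.1]
  · -- even: negative
    intro k hk heven
    rw [val_eq T (k-1)]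
    have hest := key_est (k-1)
    have hodd : Odd (k-1) := Nat.Even.sub_odd hk heven odd_one
    rw [hodd.neg_one_pow] at hest
    have hE := Eps_pos (k-1)
    have := abs_le.1 hest
    linarith [this.2]
end

section
/- Let α : ℕ → ℕ (indexed by m = 1, 2, 3, …) satisfy α_m ≥ m for all m, let z ∈ (0,1), let β : ℕ → ℝ satisfy |β_m| ≤ 1 for all m, and let q < p be positive integers such that β_m = 0 for all m with q < m < p. If |∑_{m=1}^{q} β_m z^{α_m}| > ∑_{m=p}^∞ z^{α_m}, then for every integer Q ≥ q the finite sum ∑_{m=1}^{Q} β_m z^{α_m} is strictly positive whenever ∑_{m=1}^{q} β_m z^{α_m} > 0 and strictly negative whenever ∑_{m=1}^{q} β_m z^{α_m} < 0. -/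
/-- Finite-sum version of the sign-propagation estimate (Theorem 3.2(iv) of the paper):
the partial sums `∑_{m=1}^Q β_m z^{α_m}`, `Q ≥ q`, have the sign of the head
`∑_{m=1}^q β_m z^{α_m}` when the head dominates the tail `∑_{m=p}^∞ z^{α_m}`. -/
theorem stmt10 (α : ℕ → ℕ) (hα : ∀ m : ℕ, 1 ≤ m → m ≤ α m)
    (z : ℝ) (hz : z ∈ Set.Ioo (0 : ℝ) 1)
    (β : ℕ → ℝ) (hβ : ∀ m : ℕ, 1 ≤ m → |β m| ≤ 1)
    (q p : ℕ) (hq : 1 ≤ q) (hqp : q < p)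
    (hzero : ∀ m : ℕ, q < m → m < p → β m = 0)
    (hdom : (∑' m : ℕ, z ^ α (m + p)) < |∑ m ∈ Finset.Icc 1 q, β m * z ^ α m|) :
    ∀ Q : ℕ, q ≤ Q →
      (0 < ∑ m ∈ Finset.Icc 1 q, β m * z ^ α m →
        0 < ∑ m ∈ Finset.Icc 1 Q, β m * z ^ α m) ∧
      ((∑ m ∈ Finset.Icc 1 q, β m * z ^ α m) < 0 →
        (∑ m ∈ Finset.Icc 1 Q, β m * z ^ α m) < 0) := by
  obtain ⟨hz0, hz1⟩ := hz
  set S : ℕ → ℝ := fun n => ∑ m ∈ Finset.Icc 1 n, β m * z ^ α m with hS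
  have hsumm : Summable (fun m : ℕ => z ^ α (m + p)) := by
    have hg : Summable (fun m : ℕ => z ^ (m + p)) := by
      simpa [pow_add] using (summable_geometric_of_lt_one hz0.le hz1).mul_right (z ^ p)
    exact hg.of_nonneg_of_le (fun m => by positivity)
      (fun m => pow_le_pow_of_le_one hz0.le hz1.le
        (le_trans (by omega) (hα (m + p) (by omega))))
  intro Q hQ
  -- bound the gap
  have hgap : |S Q - S q| ≤ ∑' m : ℕ, z ^ α (m + p) := by
    have hsub : Finset.Icc 1 q ⊆ Finset.Icc 1 Q := Finset.Icc_subset_Icc_right hQ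
    have : S Q - S q = ∑ m ∈ Finset.Icc (q + 1) Q, β m * z ^ α m := by
      rw [hS]
      simp only
      rw [← Finset.sum_sdiff hsub]
      have : Finset.Icc 1 Q \ Finset.Icc 1 q = Finset.Icc (q + 1) Q := by
        ext m; simp [Finset.mem_Icc, Finset.mem_sdiff]; omega
      rw [this]; ring
    rw [this]
    calc |∑ m ∈ Finset.Icc (q + 1) Q, β m * z ^ α m|
        ≤ ∑ m ∈ Finset.Icc (q + 1) Q, |β m * z ^ α m| := Finset.abs_sum_le_sum_abs _ _
      _ ≤ ∑ m ∈ Finset.Icc p Q, z ^ α m := by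
          rw [← Finset.sum_sdiff (Finset.Icc_subset_Icc_left (by omega) :
            Finset.Icc p Q ⊆ Finset.Icc (q + 1) Q)]
          have h1 : ∑ m ∈ Finset.Icc (q + 1) Q \ Finset.Icc p Q, |β m * z ^ α m| = 0 := by
            apply Finset.sum_eq_zero
            intro m hm
            simp only [Finset.mem_sdiff, Finset.mem_Icc] at hm
            have : β m = 0 := hzero m (by omega) (by omega)
            simp [this]
          rw [h1, zero_add]
          apply Finset.sum_le_sum
          intro m hm
          rw [abs_mul, abs_pow, abs_of_pos hz0]
          have : |β m| ≤ 1 := hβ m (by simp [Finset.mem_Icc] at hm; omega)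
          nlinarith [pow_pos hz0 (α m)]
      _ ≤ ∑' m : ℕ, z ^ α (m + p) := by
          rw [show Finset.Icc p Q = Finset.Ico p (Q + 1) by
            rw [Finset.Ico_add_one_right_eq_Icc], Finset.sum_Ico_eq_sum_range]
          have : ∀ i ∈ Finset.range (Q + 1 - p), z ^ α (p + i) = z ^ α (i + p) := by
            intro i _; rw [add_comm]
          rw [Finset.sum_congr rfl this]
          exact Summable.sum_le_tsum _ (fun m _ => by positivity) hsumm
  have key : |S Q - S q| < |S q| := lt_of_le_of_lt hgap hdom
  rw [abs_sub_lt_iff] at key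
  constructor
  · intro h
    rw [abs_of_pos h] at key
    simp only [hS] at key ⊢
    linarith [key.1, key.2]
  · intro h
    rw [abs_of_neg h] at key
    simp only [hS] at key ⊢
    linarith [key.1, key.2]
end
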